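/- arXiv:2107.12263 — 4 statements merged into one kernel-verified Lean document; each statement's English description precedes it below -/
import Mathlib

section
/- In G_n = B_n / [PB_n, PB_n], if |{i,j} ∩ {k,ℓ}| ≠ 1 then σ̃_{i,j} g_{k,ℓ} σ̃_{i,j}⁻¹ = g_{k,ℓ}. In particular, conjugation by half-twists fixes full twists on disjoint or equal index pairs. -/
/-- Artin relations for the braid group on `n` strands (generators indexed by `Fin (n-1)`). -/
def braidRels (n : ℕ) : Set (FreeGroup (Fin (n - 1))) :=
  {r | ∃ i j : Fin (n - 1),
    ((i : ℕ) + 1 = (j : ℕ) ∧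
      r = FreeGroup.of i * FreeGroup.of j * FreeGroup.of i *
        (FreeGroup.of j * FreeGroup.of i * FreeGroup.of j)⁻¹) ∨
    ((i : ℕ) + 1 < (j : ℕ) ∧
      r = FreeGroup.of i * FreeGroup.of j * (FreeGroup.of j * FreeGroup.of i)⁻¹)}

/-- The braid group `B_n`. -/
abbrev BraidGroup (n : ℕ) := PresentedGroup (braidRels n)

/-- The Artin generator `b_t` (`0`-based; trivial outside range). -/
noncomputable def bgen (n t : ℕ) : BraidGroup n :=
  if h : t < n - 1 then PresentedGroup.of (⟨t, h⟩ : Fin (n - 1)) else 1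

/-- The product `b_i ⋯ b_{j-1}`. -/
noncomputable def bpref (n i j : ℕ) : BraidGroup n :=
  ((List.range' i (j - i)).map (bgen n)).prod

/-- The half twist `b_{i,j}` (for strands `i < j`, `0`-based). -/
noncomputable def halfTwist (n i j : ℕ) : BraidGroup n :=
  bpref n i (j - 1) * bgen n (j - 1) * (bpref n i (j - 1))⁻¹

/-- The half twist for unordered indices. -/
noncomputable def bb (n i j : ℕ) : BraidGroup n := halfTwist n (min i j) (max i j)

/-- The standard generator condition for the projection `B_n → S_n`. -/
def IsBraidProj (n : ℕ) (π : BraidGroup n →* Equiv.Perm (Fin n)) : Prop :=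
  ∀ i : Fin (n - 1), π (PresentedGroup.of i) =
    Equiv.swap ⟨(i : ℕ), by have := i.2; omega⟩ ⟨(i : ℕ) + 1, by have := i.2; omega⟩

/-- `G_n = B_n/[PB_n, PB_n]`. -/
abbrev Gq (n : ℕ) (π : BraidGroup n →* Equiv.Perm (Fin n)) :=
  BraidGroup n ⧸ (⁅π.ker, π.ker⁆ : Subgroup (BraidGroup n))

/-- Image of the half twist `b_{i,j}` in `G_n`. -/
noncomputable def ht (n : ℕ) (π : BraidGroup n →* Equiv.Perm (Fin n)) (i j : ℕ) : Gq n π :=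
  QuotientGroup.mk (bb n i j)

/-- Image of the full twist `b_{i,j}²` in `G_n`. -/
noncomputable def ft (n : ℕ) (π : BraidGroup n →* Equiv.Perm (Fin n)) (i j : ℕ) : Gq n π :=
  QuotientGroup.mk ((bb n i j) ^ 2)

namespace Stmt9

private lemma pres_eq {α : Type*} {rels : Set (FreeGroup α)} {a b : FreeGroup α}
    (h : a * b⁻¹ ∈ rels) : PresentedGroup.mk rels a = PresentedGroup.mk rels b := by
  have h1 : PresentedGroup.mk rels (a * b⁻¹) = 1 :=
    (QuotientGroup.eq_one_iff _).mpr (Subgroup.subset_normalClosure h)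
  rwa [map_mul, map_inv, mul_inv_eq_one] at h1

lemma bgen_braid (n t : ℕ) (h : t + 2 < n) :
    bgen n t * bgen n (t + 1) * bgen n t = bgen n (t + 1) * bgen n t * bgen n (t + 1) := by
  have h1 : t < n - 1 := by omega
  have h2 : t + 1 < n - 1 := by omega
  have hmem : (FreeGroup.of (⟨t, h1⟩ : Fin (n - 1)) * FreeGroup.of (⟨t + 1, h2⟩ : Fin (n - 1)) *
      FreeGroup.of (⟨t, h1⟩ : Fin (n - 1)) *
      (FreeGroup.of (⟨t + 1, h2⟩ : Fin (n - 1)) * FreeGroup.of (⟨t, h1⟩ : Fin (n - 1)) *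
        FreeGroup.of (⟨t + 1, h2⟩ : Fin (n - 1)))⁻¹) ∈ braidRels n :=
    ⟨⟨t, h1⟩, ⟨t + 1, h2⟩, Or.inl ⟨rfl, rfl⟩⟩
  have hp := pres_eq hmem
  simp only [map_mul] at hp
  simpa [bgen, dif_pos h1, dif_pos h2, PresentedGroup.of] using hp

lemma bgen_comm (n : ℕ) {s t : ℕ} (h : s + 2 ≤ t) : Commute (bgen n s) (bgen n t) := by
  by_cases h2 : t < n - 1
  · have h1 : s < n - 1 := by omega
    have hmem : (FreeGroup.of (⟨s, h1⟩ : Fin (n - 1)) * FreeGroup.of (⟨t, h2⟩ : Fin (n - 1)) *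
        (FreeGroup.of (⟨t, h2⟩ : Fin (n - 1)) * FreeGroup.of (⟨s, h1⟩ : Fin (n - 1)))⁻¹) ∈
        braidRels n := ⟨⟨s, h1⟩, ⟨t, h2⟩, Or.inr ⟨by simpa using by omega, rfl⟩⟩
    have hp := pres_eq hmem
    simp only [map_mul] at hp
    have : bgen n s * bgen n t = bgen n t * bgen n s := by
      simpa [bgen, dif_pos h1, dif_pos h2, PresentedGroup.of] using hp
    exact this
  · have ht1 : bgen n t = 1 := by rw [bgen, dif_neg h2]
    rw [ht1]
    exact Commute.one_right _

lemma bgen_comm' (n : ℕ) {s t : ℕ} (h : s + 2 ≤ t ∨ t + 2 ≤ s) :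
    Commute (bgen n s) (bgen n t) := by
  rcases h with h | h
  · exact bgen_comm n h
  · exact (bgen_comm n h).symm

lemma bpref_nil (n : ℕ) {i j : ℕ} (h : j ≤ i) : bpref n i j = 1 := by
  unfold bpref
  rw [Nat.sub_eq_zero_of_le h]
  simp

lemma bpref_cons (n : ℕ) {i j : ℕ} (h : i < j) : bpref n i j = bgen n i * bpref n (i + 1) j := by
  unfold bpref
  have h1 : j - i = (j - (i + 1)) + 1 := by omega
  rw [h1, List.range'_succ]
  simp

lemma bpref_snoc (n : ℕ) {i j : ℕ} (h : i ≤ j) :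
    bpref n i (j + 1) = bpref n i j * bgen n j := by
  unfold bpref
  have h1 : j + 1 - i = (j - i) + 1 := by omega
  rw [h1, List.range'_concat]
  have h2 : i + 1 * (j - i) = j := by omega
  have h3 : i + (j - i) = j := by omega
  simp [h2, h3]

lemma bgen_bpref_comm (n : ℕ) {s a b : ℕ} (h : ∀ u, a ≤ u → u < b → s + 2 ≤ u ∨ u + 2 ≤ s) :
    Commute (bgen n s) (bpref n a b) := by
  apply Commute.list_prod_right
  intro x hx
  simp only [List.mem_map] at hx
  obtain ⟨u, hu, rfl⟩ := hx
  rw [List.mem_range'_1] at hu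
  exact bgen_comm' n (h u hu.1 (by omega))

lemma shift_aux (n b : ℕ) (hbn : b < n) :
    ∀ d t a, a < t → t < b → t - a = d + 1 →
      bgen n t * bpref n a b = bpref n a b * bgen n (t - 1) := by
  intro d
  induction d with
  | zero =>
    intro t a hat htb hd
    have hta : t = a + 1 := by omega
    subst hta
    have hab : a < b := by omega
    have hab1 : a + 1 < b := htb
    rw [bpref_cons n hab, bpref_cons n hab1]
    have hcomm : Commute (bgen n a) (bpref n (a + 2) b) :=
      bgen_bpref_comm n (fun u hu _ => Or.inl (by omega))
    have hbr : bgen n a * bgen n (a + 1) * bgen n a =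
        bgen n (a + 1) * bgen n a * bgen n (a + 1) := bgen_braid n a (by omega)
    have : a + 1 - 1 = a := by omega
    rw [this]
    calc bgen n (a + 1) * (bgen n a * (bgen n (a + 1) * bpref n (a + 2) b))
        = (bgen n (a + 1) * bgen n a * bgen n (a + 1)) * bpref n (a + 2) b := by group
      _ = (bgen n a * bgen n (a + 1) * bgen n a) * bpref n (a + 2) b := by rw [← hbr]
      _ = bgen n a * bgen n (a + 1) * (bgen n a * bpref n (a + 2) b) := by group
      _ = bgen n a * bgen n (a + 1) * (bpref n (a + 2) b * bgen n a) := by rw [hcomm.eq]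
      _ = bgen n a * (bgen n (a + 1) * bpref n (a + 2) b) * bgen n a := by group
  | succ d ih =>
    intro t a hat htb hd
    have hab : a < b := by omega
    rw [bpref_cons n hab]
    have hcomm : Commute (bgen n a) (bgen n t) := bgen_comm n (show a + 2 ≤ t by omega)
    calc bgen n t * (bgen n a * bpref n (a + 1) b)
        = bgen n a * (bgen n t * bpref n (a + 1) b) := by
          rw [← mul_assoc, ← hcomm.eq, mul_assoc]
      _ = bgen n a * (bpref n (a + 1) b * bgen n (t - 1)) := by
          rw [ih t (a + 1) (by omega) htb (by omega)]
      _ = bgen n a * bpref n (a + 1) b * bgen n (t - 1) := by group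

lemma shift (n : ℕ) {a b t : ℕ} (hat : a < t) (htb : t < b) (hbn : b < n) :
    bgen n t * bpref n a b = bpref n a b * bgen n (t - 1) :=
  shift_aux n b hbn (t - a - 1) t a hat htb (by omega)

-- Case 1: separated
lemma comm_sep (n : ℕ) {t k l : ℕ} (hkl : k < l) (h : t + 1 < k ∨ l < t) :
    Commute (bgen n t) (halfTwist n k l) := by
  have hP : Commute (bgen n t) (bpref n k (l - 1)) :=
    bgen_bpref_comm n (fun u hu hub => by omega)
  have hg : Commute (bgen n t) (bgen n (l - 1)) := bgen_comm' n (by omega)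
  exact (hP.mul_right hg).mul_right hP.inv_right

-- Case 2: interior
lemma comm_int (n : ℕ) {t k l : ℕ} (hkt : k < t) (htl : t + 1 < l) (hln : l ≤ n) :
    Commute (bgen n t) (halfTwist n k l) := by
  have hs : bgen n t * bpref n k (l - 1) = bpref n k (l - 1) * bgen n (t - 1) :=
    shift n hkt (by omega) (by omega)
  have hg : Commute (bgen n (t - 1)) (bgen n (l - 1)) := bgen_comm' n (by omega)
  have hs' : bgen n (t - 1) * (bpref n k (l - 1))⁻¹ = (bpref n k (l - 1))⁻¹ * bgen n t := by
    calc bgen n (t - 1) * (bpref n k (l - 1))⁻¹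
        = (bpref n k (l - 1))⁻¹ * (bpref n k (l - 1) * bgen n (t - 1)) * (bpref n k (l - 1))⁻¹ := by
          group
      _ = (bpref n k (l - 1))⁻¹ * (bgen n t * bpref n k (l - 1)) * (bpref n k (l - 1))⁻¹ := by
          rw [← hs]
      _ = (bpref n k (l - 1))⁻¹ * bgen n t := by group
  unfold halfTwist
  show _ = _
  calc bgen n t * (bpref n k (l - 1) * bgen n (l - 1) * (bpref n k (l - 1))⁻¹)
      = (bgen n t * bpref n k (l - 1)) * bgen n (l - 1) * (bpref n k (l - 1))⁻¹ := by group
    _ = bpref n k (l - 1) * (bgen n (t - 1) * bgen n (l - 1)) * (bpref n k (l - 1))⁻¹ := by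
        rw [hs]; group
    _ = bpref n k (l - 1) * bgen n (l - 1) * (bgen n (t - 1) * (bpref n k (l - 1))⁻¹) := by
        rw [hg.eq]; group
    _ = bpref n k (l - 1) * bgen n (l - 1) * ((bpref n k (l - 1))⁻¹ * bgen n t) := by
        rw [hs']
    _ = bpref n k (l - 1) * bgen n (l - 1) * (bpref n k (l - 1))⁻¹ * bgen n t := by group

lemma conj_sq {G : Type*} [Group G] {a x y : G} (h : a * x * a⁻¹ = y) :
    a * x ^ 2 * a⁻¹ = y ^ 2 := by rw [← h]; simp only [sq]; group

-- Case 3: t + 1 = k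
lemma conj_left (n : ℕ) {t l : ℕ} (h : t + 1 < l) :
    bgen n t * halfTwist n (t + 1) l * (bgen n t)⁻¹ = halfTwist n t l := by
  unfold halfTwist
  rw [show bpref n t (l - 1) = bgen n t * bpref n (t + 1) (l - 1) from bpref_cons n (by omega)]
  group

-- Case 7: t + 1 = l
lemma conj_right (n : ℕ) {k p : ℕ} (hk : k ≤ p) (hn : p + 2 < n) :
    bgen n (p + 1) * halfTwist n k (p + 2) * (bgen n (p + 1))⁻¹ = halfTwist n k (p + 1) := by
  have hbr : bgen n p * bgen n (p + 1) * bgen n p =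
      bgen n (p + 1) * bgen n p * bgen n (p + 1) := bgen_braid n p hn
  have hcomm : Commute (bgen n (p + 1)) (bpref n k p) :=
    bgen_bpref_comm n (fun u hu hub => Or.inr (by omega))
  have hc' : (bgen n (p + 1))⁻¹ * (bpref n k p)⁻¹ = (bpref n k p)⁻¹ * (bgen n (p + 1))⁻¹ :=
    (hcomm.inv_left.inv_right).eq
  have hmid : bgen n (p + 1) * (bgen n p * bgen n (p + 1) * (bgen n p)⁻¹) * (bgen n (p + 1))⁻¹
      = bgen n p := by
    calc bgen n (p + 1) * (bgen n p * bgen n (p + 1) * (bgen n p)⁻¹) * (bgen n (p + 1))⁻¹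
        = (bgen n (p + 1) * bgen n p * bgen n (p + 1)) * (bgen n p)⁻¹ * (bgen n (p + 1))⁻¹ := by
          group
      _ = (bgen n p * bgen n (p + 1) * bgen n p) * (bgen n p)⁻¹ * (bgen n (p + 1))⁻¹ := by
          rw [hbr]
      _ = bgen n p := by group
  have h1 : p + 2 - 1 = p + 1 := by omega
  have h2 : p + 1 - 1 = p := by omega
  unfold halfTwist
  rw [h1, h2, bpref_snoc n hk]
  calc bgen n (p + 1) * (bpref n k p * bgen n p * bgen n (p + 1) *
          (bpref n k p * bgen n p)⁻¹) * (bgen n (p + 1))⁻¹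
      = (bgen n (p + 1) * bpref n k p) * (bgen n p * bgen n (p + 1) * (bgen n p)⁻¹) *
          ((bpref n k p)⁻¹ * (bgen n (p + 1))⁻¹) := by group
    _ = (bpref n k p * bgen n (p + 1)) * (bgen n p * bgen n (p + 1) * (bgen n p)⁻¹) *
          ((bgen n (p + 1))⁻¹ * (bpref n k p)⁻¹) := by rw [hcomm.eq, ← hc']
    _ = bpref n k p * (bgen n (p + 1) * (bgen n p * bgen n (p + 1) * (bgen n p)⁻¹) *
          (bgen n (p + 1))⁻¹) * (bpref n k p)⁻¹ := by group
    _ = bpref n k p * bgen n p * (bpref n k p)⁻¹ := by rw [hmid]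

-- Case 4 decomposition: t = k
lemma decomp_left (n : ℕ) {k l : ℕ} (h : k + 1 < l) :
    halfTwist n k l = bgen n k * halfTwist n (k + 1) l * (bgen n k)⁻¹ := by
  unfold halfTwist
  rw [show bpref n k (l - 1) = bgen n k * bpref n (k + 1) (l - 1) from bpref_cons n (by omega)]
  group

-- Case 6 braid consequence
lemma conj_top (n : ℕ) {k l : ℕ} (hkl : k < l) (hln : l + 1 < n) :
    bgen n l * halfTwist n k l ^ 2 * (bgen n l)⁻¹ =
      (halfTwist n k l ^ 2)⁻¹ * halfTwist n k (l + 1) ^ 2 * ((halfTwist n k l ^ 2)⁻¹)⁻¹ := by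
  have hbr : bgen n (l - 1) * bgen n l * bgen n (l - 1) =
      bgen n l * bgen n (l - 1) * bgen n l := by
    have := bgen_braid n (l - 1) (by omega)
    rwa [show l - 1 + 1 = l from by omega] at this
  have h1 : bgen n l * bgen n (l - 1) * (bgen n l)⁻¹ =
      (bgen n (l - 1))⁻¹ * bgen n l * bgen n (l - 1) := by
    calc bgen n l * bgen n (l - 1) * (bgen n l)⁻¹
        = (bgen n (l - 1))⁻¹ * (bgen n (l - 1) * bgen n l * bgen n (l - 1)) * (bgen n l)⁻¹ := by
          group
      _ = (bgen n (l - 1))⁻¹ * (bgen n l * bgen n (l - 1) * bgen n l) * (bgen n l)⁻¹ := by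
          rw [hbr]
      _ = (bgen n (l - 1))⁻¹ * bgen n l * bgen n (l - 1) := by group
  have hsq : bgen n l * (bgen n (l - 1)) ^ 2 * (bgen n l)⁻¹ =
      (bgen n (l - 1))⁻¹ * (bgen n l) ^ 2 * bgen n (l - 1) := by
    have := conj_sq h1
    rw [this]; simp only [sq]; group
  have hcommA : Commute (bgen n l) (bpref n k (l - 1)) :=
    bgen_bpref_comm n (fun u hu hub => Or.inr (by omega))
  have hc' : (bgen n l)⁻¹ * (bpref n k (l - 1))⁻¹ = (bpref n k (l - 1))⁻¹ * (bgen n l)⁻¹ :=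
    (hcommA.inv_left.inv_right).eq
  have hsn : bpref n k l = bpref n k (l - 1) * bgen n (l - 1) := by
    have := bpref_snoc n (show k ≤ l - 1 by omega)
    rwa [show l - 1 + 1 = l from by omega] at this
  have lhs_eq : bgen n l * halfTwist n k l ^ 2 * (bgen n l)⁻¹ =
      bpref n k (l - 1) * ((bgen n (l - 1))⁻¹ * (bgen n l) ^ 2 * bgen n (l - 1)) *
        (bpref n k (l - 1))⁻¹ := by
    unfold halfTwist
    calc bgen n l * (bpref n k (l - 1) * bgen n (l - 1) * (bpref n k (l - 1))⁻¹) ^ 2 *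
            (bgen n l)⁻¹
        = (bgen n l * bpref n k (l - 1)) * (bgen n (l - 1)) ^ 2 *
            ((bpref n k (l - 1))⁻¹ * (bgen n l)⁻¹) := by simp only [sq]; group
      _ = (bpref n k (l - 1) * bgen n l) * (bgen n (l - 1)) ^ 2 *
            ((bgen n l)⁻¹ * (bpref n k (l - 1))⁻¹) := by rw [hcommA.eq, ← hc']
      _ = bpref n k (l - 1) * (bgen n l * (bgen n (l - 1)) ^ 2 * (bgen n l)⁻¹) *
            (bpref n k (l - 1))⁻¹ := by group
      _ = bpref n k (l - 1) * ((bgen n (l - 1))⁻¹ * (bgen n l) ^ 2 * bgen n (l - 1)) *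
            (bpref n k (l - 1))⁻¹ := by rw [hsq]
  have rhs_eq : (halfTwist n k l ^ 2)⁻¹ * halfTwist n k (l + 1) ^ 2 * halfTwist n k l ^ 2 =
      bpref n k (l - 1) * ((bgen n (l - 1))⁻¹ * (bgen n l) ^ 2 * bgen n (l - 1)) *
        (bpref n k (l - 1))⁻¹ := by
    unfold halfTwist
    rw [show l + 1 - 1 = l from by omega, hsn]
    simp only [sq]; group
  rw [lhs_eq, inv_inv, rhs_eq]

def S (t x : ℕ) : ℕ := if x = t then t + 1 else if x = t + 1 then t else x

lemma S_S (t x : ℕ) : S t (S t x) = x := by unfold S; split_ifs <;> omega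

lemma S_ne (t : ℕ) {x y : ℕ} (h : x ≠ y) : S t x ≠ S t y := by
  unfold S; split_ifs <;> omega

lemma S_lt {n : ℕ} (t : ℕ) {x : ℕ} (h1 : t + 1 < n) (h2 : x < n) : S t x < n := by
  unfold S; split_ifs <;> omega

section Gq

variable (n : ℕ) (π : BraidGroup n →* Equiv.Perm (Fin n))

lemma ft_symm (a b : ℕ) : ft n π a b = ft n π b a := by
  unfold ft bb; rw [min_comm, max_comm]

lemma pi_bgen_sq (hgen : IsBraidProj n π) (t : ℕ) : π (bgen n t) * π (bgen n t) = 1 := by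
  unfold bgen
  split_ifs with h
  · rw [hgen]; exact Equiv.swap_mul_self _ _
  · simp

lemma bgen_sq_ker (hgen : IsBraidProj n π) (t : ℕ) : bgen n t ^ 2 ∈ π.ker := by
  rw [MonoidHom.mem_ker, sq, map_mul, pi_bgen_sq n π hgen]

lemma halfTwist_sq_ker (hgen : IsBraidProj n π) (k l : ℕ) : halfTwist n k l ^ 2 ∈ π.ker := by
  rw [MonoidHom.mem_ker]
  have h : halfTwist n k l ^ 2 =
      bpref n k (l - 1) * (bgen n (l - 1) * bgen n (l - 1)) * (bpref n k (l - 1))⁻¹ := by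
    unfold halfTwist; simp only [sq]; group
  rw [h, map_mul, map_mul, map_inv, map_mul, pi_bgen_sq n π hgen]
  simp

open scoped commutatorElement in
lemma mk_conj_pure {p q : BraidGroup n} (hp : p ∈ π.ker) (hq : q ∈ π.ker) :
    (QuotientGroup.mk (p * q * p⁻¹) : Gq n π) = QuotientGroup.mk q := by
  have h1 : (QuotientGroup.mk ⁅p, q⁆ : Gq n π) = 1 :=
    (QuotientGroup.eq_one_iff _).mpr (Subgroup.commutator_mem_commutator hp hq)
  have h2 : p * q * p⁻¹ = ⁅p, q⁆ * q := by rw [commutatorElement_def]; group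
  rw [h2, QuotientGroup.mk_mul, h1, one_mul]

lemma mk_goal {x y z : BraidGroup n} (h : x * y * x⁻¹ = z) :
    (QuotientGroup.mk x : Gq n π) * QuotientGroup.mk y * (QuotientGroup.mk x : Gq n π)⁻¹ =
      QuotientGroup.mk z := by
  rw [← h, QuotientGroup.mk_mul, QuotientGroup.mk_mul, QuotientGroup.mk_inv]

lemma bb_eq {c d : ℕ} (h : c < d) : bb n c d = halfTwist n c d := by
  unfold bb; rw [min_eq_left h.le, max_eq_right h.le]

lemma bb_symm (a b : ℕ) : bb n a b = bb n b a := by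
  unfold bb; rw [min_comm, max_comm]

lemma stepA (hgen : IsBraidProj n π) (t k l : ℕ) (hkl : k < l) (hln : l < n) (htn : t + 1 < n) :
    (QuotientGroup.mk (bgen n t) : Gq n π) * ft n π k l *
      (QuotientGroup.mk (bgen n t) : Gq n π)⁻¹ = ft n π (S t k) (S t l) := by
  unfold ft
  rcases (by omega : t + 1 < k ∨ t + 1 = k ∨ (t = k ∧ k + 1 = l) ∨ (t = k ∧ k + 1 < l) ∨
      (k < t ∧ t + 1 < l) ∨ (t + 1 = l ∧ k < t) ∨ t = l ∨ l < t) with h|h|h|h|h|h|h|h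
  -- Case 1a : t + 1 < k
  · have hS1 : S t k = k := by unfold S; split_ifs <;> omega
    have hS2 : S t l = l := by unfold S; split_ifs <;> omega
    rw [hS1, hS2, bb_eq n (show k < l from hkl)]
    have hc := (comm_sep n hkl (Or.inl h)).pow_right 2
    exact mk_goal n π (by rw [hc.eq]; group)
  -- Case 3 : t + 1 = k
  · have hS1 : S t k = t := by unfold S; split_ifs <;> omega
    have hS2 : S t l = l := by unfold S; split_ifs <;> omega
    rw [hS1, hS2, bb_eq n (show k < l from hkl), bb_eq n (show t < l by omega)]
    subst h
    exact mk_goal n π (conj_sq (conj_left n (by omega)))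
  -- Case 5 : t = k, l = k + 1
  · obtain ⟨rfl, hl⟩ := h
    subst hl
    have hS1 : S t t = t + 1 := by unfold S; split_ifs <;> omega
    have hS2 : S t (t + 1) = t := by unfold S; split_ifs <;> omega
    rw [hS1, hS2, bb_symm n (t + 1) t, bb_eq n (show t < t + 1 by omega)]
    have hb : halfTwist n t (t + 1) = bgen n t := by
      unfold halfTwist
      rw [show t + 1 - 1 = t from by omega, bpref_nil n le_rfl]
      group
    rw [hb]
    exact mk_goal n π (by group)
  -- Case 4 : t = k, k + 1 < l
  · obtain ⟨rfl, hl⟩ := h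
    have hS1 : S t t = t + 1 := by unfold S; split_ifs <;> omega
    have hS2 : S t l = l := by unfold S; split_ifs <;> omega
    rw [hS1, hS2, bb_eq n (show t < l from hkl), bb_eq n (show t + 1 < l from hl)]
    have hd := decomp_left n hl
    have hBn : bgen n t * halfTwist n t l ^ 2 * (bgen n t)⁻¹ =
        bgen n t ^ 2 * halfTwist n (t + 1) l ^ 2 * (bgen n t ^ 2)⁻¹ := by
      rw [hd]; simp only [sq]; group
    rw [← QuotientGroup.mk_inv, ← QuotientGroup.mk_mul, ← QuotientGroup.mk_mul, hBn]
    exact mk_conj_pure n π (bgen_sq_ker n π hgen t) (halfTwist_sq_ker n π hgen (t + 1) l)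
  -- Case 2 : k < t, t + 1 < l
  · obtain ⟨h1, h2⟩ := h
    have hS1 : S t k = k := by unfold S; split_ifs <;> omega
    have hS2 : S t l = l := by unfold S; split_ifs <;> omega
    rw [hS1, hS2, bb_eq n (show k < l from hkl)]
    have hc := (comm_int n h1 h2 hln.le).pow_right 2
    exact mk_goal n π (by rw [hc.eq]; group)
  -- Case 7 : t + 1 = l, k < t
  · obtain ⟨hl, hk⟩ := h
    obtain ⟨p, rfl⟩ : ∃ p, t = p + 1 := ⟨t - 1, by omega⟩
    obtain rfl : l = p + 2 := by omega
    have hS1 : S (p + 1) k = k := by unfold S; split_ifs <;> omega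
    have hS2 : S (p + 1) (p + 2) = p + 1 := by unfold S; split_ifs <;> omega
    rw [hS1, hS2, bb_eq n (show k < p + 2 from hkl), bb_eq n (show k < p + 1 by omega)]
    exact mk_goal n π (conj_sq (conj_right n (by omega) (by omega)))
  -- Case 6 : t = l
  · subst h
    have hS1 : S t k = k := by unfold S; split_ifs <;> omega
    have hS2 : S t t = t + 1 := by unfold S; split_ifs <;> omega
    rw [hS1, hS2, bb_eq n (show k < t from hkl), bb_eq n (show k < t + 1 by omega)]
    have hBn := conj_top n hkl htn
    rw [← QuotientGroup.mk_inv, ← QuotientGroup.mk_mul, ← QuotientGroup.mk_mul, hBn]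
    exact mk_conj_pure n π (inv_mem (halfTwist_sq_ker n π hgen k t))
      (halfTwist_sq_ker n π hgen k (t + 1))
  -- Case 1b : l < t
  · have hS1 : S t k = k := by unfold S; split_ifs <;> omega
    have hS2 : S t l = l := by unfold S; split_ifs <;> omega
    rw [hS1, hS2, bb_eq n (show k < l from hkl)]
    have hc := (comm_sep n hkl (Or.inr h)).pow_right 2
    exact mk_goal n π (by rw [hc.eq]; group)

end Gq

def SW (i j x : ℕ) : ℕ := if x = i then j else if x = j then i else x

lemma SW_ne (i j : ℕ) {x y : ℕ} (h : x ≠ y) : SW i j x ≠ SW i j y := by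
  unfold SW; split_ifs <;> omega

lemma SW_lt {n : ℕ} (i j : ℕ) {x : ℕ} (hj : j < n) (hi : i < n) (hx : x < n) : SW i j x < n := by
  unfold SW; split_ifs <;> omega

lemma S_SW_S (i j x : ℕ) (h : i + 1 < j) : S i (SW (i + 1) j (S i x)) = SW i j x := by
  unfold S SW; split_ifs <;> omega

section Gq2

variable (n : ℕ) (π : BraidGroup n →* Equiv.Perm (Fin n))

lemma stepA' (hgen : IsBraidProj n π) (t k l : ℕ) (hkl : k ≠ l) (hkn : k < n) (hln : l < n)
    (htn : t + 1 < n) :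
    (QuotientGroup.mk (bgen n t) : Gq n π) * ft n π k l *
      (QuotientGroup.mk (bgen n t) : Gq n π)⁻¹ = ft n π (S t k) (S t l) := by
  rcases hkl.lt_or_gt with h | h
  · exact stepA n π hgen t k l h hln htn
  · rw [ft_symm n π k l, ft_symm n π (S t k) (S t l)]
    exact stepA n π hgen t l k h hkn htn

lemma stepAinv (hgen : IsBraidProj n π) (t k l : ℕ) (hkl : k ≠ l) (hkn : k < n) (hln : l < n)
    (htn : t + 1 < n) :
    (QuotientGroup.mk (bgen n t) : Gq n π)⁻¹ * ft n π k l *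
      (QuotientGroup.mk (bgen n t) : Gq n π) = ft n π (S t k) (S t l) := by
  have h := stepA' n π hgen t (S t k) (S t l) (S_ne t hkl) (S_lt t htn hkn) (S_lt t htn hln) htn
  rw [S_S, S_S] at h
  rw [← h]
  group

lemma main (hgen : IsBraidProj n π) :
    ∀ d i j k l : ℕ, j = i + d + 1 → j < n → k ≠ l → k < n → l < n →
      ht n π i j * ft n π k l * (ht n π i j)⁻¹ = ft n π (SW i j k) (SW i j l) := by
  intro d
  induction d with
  | zero =>
    intro i j k l hj hjn hkl hkn hln
    subst hj
    have hb : bb n i (i + 0 + 1) = bgen n i := by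
      rw [bb_eq n (by omega)]
      unfold halfTwist
      rw [show i + 0 + 1 - 1 = i from by omega, bpref_nil n le_rfl]
      group
    unfold ht
    rw [hb, stepA' n π hgen i k l hkl hkn hln (by omega),
      show SW i (i + 0 + 1) k = S i k from by unfold SW S; split_ifs <;> omega,
      show SW i (i + 0 + 1) l = S i l from by unfold SW S; split_ifs <;> omega]
  | succ d ihd =>
    intro i j k l hj hjn hkl hkn hln
    have hij1 : i + 1 < j := by omega
    have hin : i + 1 < n := by omega
    have hdec : bb n i j = bgen n i * bb n (i + 1) j * (bgen n i)⁻¹ := by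
      rw [bb_eq n (by omega), bb_eq n hij1]
      unfold halfTwist
      rw [show bpref n i (j - 1) = bgen n i * bpref n (i + 1) (j - 1) from bpref_cons n (by omega)]
      group
    have e1 := stepAinv n π hgen i k l hkl hkn hln hin
    have e2 := ihd (i + 1) j (S i k) (S i l) (by omega) hjn (S_ne i hkl)
      (S_lt i hin hkn) (S_lt i hin hln)
    have e3 := stepA' n π hgen i (SW (i + 1) j (S i k)) (SW (i + 1) j (S i l))
      (SW_ne _ _ (S_ne i hkl)) (SW_lt _ _ hjn hin (S_lt i hin hkn))
      (SW_lt _ _ hjn hin (S_lt i hin hln)) hin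
    unfold ht
    unfold ht at e2
    rw [hdec, QuotientGroup.mk_mul, QuotientGroup.mk_mul, QuotientGroup.mk_inv]
    calc (QuotientGroup.mk (bgen n i) : Gq n π) * QuotientGroup.mk (bb n (i + 1) j) *
            (QuotientGroup.mk (bgen n i) : Gq n π)⁻¹ * ft n π k l *
            ((QuotientGroup.mk (bgen n i) : Gq n π) * QuotientGroup.mk (bb n (i + 1) j) *
              (QuotientGroup.mk (bgen n i) : Gq n π)⁻¹)⁻¹
        = (QuotientGroup.mk (bgen n i) : Gq n π) * (QuotientGroup.mk (bb n (i + 1) j) *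
            ((QuotientGroup.mk (bgen n i) : Gq n π)⁻¹ * ft n π k l *
              (QuotientGroup.mk (bgen n i) : Gq n π)) * (QuotientGroup.mk (bb n (i + 1) j))⁻¹) *
            (QuotientGroup.mk (bgen n i) : Gq n π)⁻¹ := by group
      _ = (QuotientGroup.mk (bgen n i) : Gq n π) * (QuotientGroup.mk (bb n (i + 1) j) *
            ft n π (S i k) (S i l) * (QuotientGroup.mk (bb n (i + 1) j))⁻¹) *
            (QuotientGroup.mk (bgen n i) : Gq n π)⁻¹ := by rw [e1]
      _ = (QuotientGroup.mk (bgen n i) : Gq n π) *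
            ft n π (SW (i + 1) j (S i k)) (SW (i + 1) j (S i l)) *
            (QuotientGroup.mk (bgen n i) : Gq n π)⁻¹ := by rw [← e2]
      _ = ft n π (S i (SW (i + 1) j (S i k))) (S i (SW (i + 1) j (S i l))) := e3
      _ = ft n π (SW i j k) (SW i j l) := by rw [S_SW_S i j k hij1, S_SW_S i j l hij1]

end Gq2

end Stmt9

/-- In `G_n = B_n/[PB_n, PB_n]`, if `|{i,j} ∩ {k,ℓ}| ≠ 1` then
`σ̃_{i,j} g_{k,ℓ} σ̃_{i,j}⁻¹ = g_{k,ℓ}`: conjugation by half twists fixes full twists on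
disjoint or equal index pairs. -/
theorem statement9 (n : ℕ) (π : BraidGroup n →* Equiv.Perm (Fin n))
    (hgen : IsBraidProj n π) (hsurj : Function.Surjective π)
    (i j k l : ℕ) (hij : i < j) (hkl : k < l) (hjn : j < n) (hln : l < n)
    (hcard : (({i, j} : Finset ℕ) ∩ {k, l}).card ≠ 1) :
    ht n π i j * ft n π k l * (ht n π i j)⁻¹ = ft n π k l := by
  have hdisj : (k ≠ i ∧ k ≠ j ∧ l ≠ i ∧ l ≠ j) ∨ (i = k ∧ j = l) := by
    by_cases h1 : k = i
    · by_cases h2 : l = j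
      · exact Or.inr ⟨h1.symm, h2.symm⟩
      · exfalso
        apply hcard
        rw [show ({i, j} : Finset ℕ) ∩ {k, l} = {i} from by
          ext x
          simp only [Finset.mem_inter, Finset.mem_insert, Finset.mem_singleton]
          omega]
        exact Finset.card_singleton i
    · by_cases h2 : k = j
      · exfalso
        apply hcard
        rw [show ({i, j} : Finset ℕ) ∩ {k, l} = {j} from by
          ext x
          simp only [Finset.mem_inter, Finset.mem_insert, Finset.mem_singleton]
          omega]
        exact Finset.card_singleton j
      · by_cases h3 : l = i
        · exfalso
          apply hcard
          rw [show ({i, j} : Finset ℕ) ∩ {k, l} = {i} from by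
            ext x
            simp only [Finset.mem_inter, Finset.mem_insert, Finset.mem_singleton]
            omega]
          exact Finset.card_singleton i
        · by_cases h4 : l = j
          · exfalso
            apply hcard
            rw [show ({i, j} : Finset ℕ) ∩ {k, l} = {j} from by
              ext x
              simp only [Finset.mem_inter, Finset.mem_insert, Finset.mem_singleton]
              omega]
            exact Finset.card_singleton j
          · exact Or.inl ⟨h1, h2, h3, h4⟩
  have hmain := Stmt9.main n π hgen (j - i - 1) i j k l (by omega) hjn (by omega)
    (by omega) hln
  rcases hdisj with ⟨h1, h2, h3, h4⟩ | ⟨rfl, rfl⟩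
  · rwa [show Stmt9.SW i j k = k from by unfold Stmt9.SW; split_ifs <;> omega,
      show Stmt9.SW i j l = l from by unfold Stmt9.SW; split_ifs <;> omega] at hmain
  · rwa [show Stmt9.SW i j i = j from by unfold Stmt9.SW; split_ifs <;> omega,
      show Stmt9.SW i j j = i from by unfold Stmt9.SW; split_ifs <;> omega,
      Stmt9.ft_symm n π j i] at hmain
end

section
/- In the group G_n = B_n/[PB_n, PB_n], for i < k < j (or j < i < k, or k < j < i) the relation σ̃_{i,j} σ̃_{j,k} σ̃_{i,j}⁻¹ σ̃_{i,k}⁻¹ = g_{i,j} g_{k,j}⁻¹ holds, and equivalently σ̃_{i,j}⁻¹ σ̃_{j,k} σ̃_{i,j} = σ̃_{i,k}. -/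
namespace St10

/-- Relators map to 1 in the presented group. -/
lemma mk_rel_one (n : ℕ) {r : FreeGroup (Fin (n - 1))} (h : r ∈ braidRels n) :
    (QuotientGroup.mk r : BraidGroup n) = 1 :=
  (QuotientGroup.eq_one_iff r).mpr (Subgroup.subset_normalClosure h)

lemma bgen_braid (n : ℕ) {t : ℕ} (h : t + 1 < n - 1) :
    bgen n t * bgen n (t + 1) * bgen n t = bgen n (t + 1) * bgen n t * bgen n (t + 1) := by
  have ht : t < n - 1 := by omega
  have hmem : (FreeGroup.of (⟨t, ht⟩ : Fin (n - 1)) * FreeGroup.of (⟨t + 1, h⟩ : Fin (n - 1)) *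
      FreeGroup.of (⟨t, ht⟩ : Fin (n - 1)) *
      (FreeGroup.of (⟨t + 1, h⟩ : Fin (n - 1)) * FreeGroup.of (⟨t, ht⟩ : Fin (n - 1)) *
        FreeGroup.of (⟨t + 1, h⟩ : Fin (n - 1)))⁻¹) ∈ braidRels n :=
    ⟨⟨t, ht⟩, ⟨t + 1, h⟩, Or.inl ⟨rfl, rfl⟩⟩
  have h1 := mk_rel_one n hmem
  rw [QuotientGroup.mk_mul, QuotientGroup.mk_inv, QuotientGroup.mk_mul, QuotientGroup.mk_mul,
    QuotientGroup.mk_mul, mul_inv_eq_one] at h1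
  rw [bgen, bgen, dif_pos ht, dif_pos h]
  exact h1

lemma bgen_comm (n : ℕ) {t u : ℕ} (h : t + 1 < u) : Commute (bgen n t) (bgen n u) := by
  by_cases hu : u < n - 1
  · have ht : t < n - 1 := by omega
    have hmem : (FreeGroup.of (⟨t, ht⟩ : Fin (n - 1)) * FreeGroup.of (⟨u, hu⟩ : Fin (n - 1)) *
        (FreeGroup.of (⟨u, hu⟩ : Fin (n - 1)) * FreeGroup.of (⟨t, ht⟩ : Fin (n - 1)))⁻¹) ∈
        braidRels n := ⟨⟨t, ht⟩, ⟨u, hu⟩, Or.inr ⟨h, rfl⟩⟩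
    have h1 := mk_rel_one n hmem
    rw [QuotientGroup.mk_mul, QuotientGroup.mk_inv, QuotientGroup.mk_mul, QuotientGroup.mk_mul,
      mul_inv_eq_one] at h1
    rw [bgen, bgen, dif_pos ht, dif_pos hu]
    exact h1
  · have h2 : bgen n u = 1 := dif_neg hu
    rw [h2]; exact Commute.one_right _


lemma bpref_nil (n : ℕ) {a b : ℕ} (h : b ≤ a) : bpref n a b = 1 := by
  rw [bpref, Nat.sub_eq_zero_of_le h, List.range'_zero, List.map_nil, List.prod_nil]

lemma bpref_concat (n : ℕ) {a m : ℕ} (h : a ≤ m) :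
    bpref n a (m + 1) = bpref n a m * bgen n m := by
  have h1 : m + 1 - a = (m - a) + 1 := by omega
  rw [bpref, bpref, h1, List.range'_concat, List.map_append, List.prod_append]
  have h2 : a + 1 * (m - a) = m := by omega
  rw [h2, List.map_singleton, List.prod_singleton]

lemma bpref_cons (n : ℕ) {a m : ℕ} (h : a < m) :
    bpref n a m = bgen n a * bpref n (a + 1) m := by
  have h1 : m - a = (m - (a + 1)) + 1 := by omega
  rw [bpref, bpref, h1, List.range'_succ, List.map_cons, List.prod_cons]

lemma ht_base (n : ℕ) (c : ℕ) : halfTwist n c (c + 1) = bgen n c := by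
  rw [halfTwist]
  have h1 : c + 1 - 1 = c := by omega
  rw [h1, bpref_nil n le_rfl, one_mul, inv_one, mul_one]

lemma ht_cons (n : ℕ) {c b : ℕ} (h : c + 1 < b) :
    halfTwist n c b = bgen n c * halfTwist n (c + 1) b * (bgen n c)⁻¹ := by
  rw [halfTwist, halfTwist, bpref_cons n (show c < b - 1 by omega)]
  group

lemma ht_pref (n : ℕ) {a b : ℕ} (h : a < b) :
    halfTwist n a b * bpref n a (b - 1) = bpref n a b := by
  rw [halfTwist, inv_mul_cancel_right]
  conv_rhs => rw [show b = (b - 1) + 1 by omega]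
  rw [bpref_concat n (show a ≤ b - 1 by omega)]

lemma comm_bgen_bpref (n : ℕ) {t c m : ℕ} (h : t + 1 < c) :
    Commute (bgen n t) (bpref n c m) := by
  rw [bpref]
  apply Commute.list_prod_right
  intro y hy
  simp only [List.mem_map, List.mem_range'] at hy
  obtain ⟨u, ⟨d, hd, hu⟩, rfl⟩ := hy
  exact bgen_comm n (by omega)

lemma comm_bgen_ht (n : ℕ) {t c b : ℕ} (h : t + 1 < c) (hcb : c < b) :
    Commute (bgen n t) (halfTwist n c b) := by
  rw [halfTwist]
  have h1 : Commute (bgen n t) (bpref n c (b - 1)) := comm_bgen_bpref n h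
  have h2 : Commute (bgen n t) (bgen n (b - 1)) := bgen_comm n (by omega)
  exact (h1.mul_right h2).mul_right h1.inv_right

lemma comm_bpref_ht (n : ℕ) {a m c b : ℕ} (h : m < c) (hcb : c < b) :
    Commute (bpref n a m) (halfTwist n c b) := by
  rw [bpref]
  apply Commute.list_prod_left
  intro y hy
  simp only [List.mem_map, List.mem_range'] at hy
  obtain ⟨u, ⟨d, hd, hu⟩, rfl⟩ := hy
  exact comm_bgen_ht n (by omega) hcb

lemma conj_ht_aux (n : ℕ) : ∀ (d a b : ℕ), a + d < b →
    bpref n a (a + d) * halfTwist n (a + d) b * (bpref n a (a + d))⁻¹ = halfTwist n a b := by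
  intro d
  induction d with
  | zero =>
    intro a b h
    rw [Nat.add_zero, bpref_nil n le_rfl, one_mul, inv_one, mul_one]
  | succ d ih =>
    intro a b h
    have e : a + (d + 1) = (a + 1) + d := by omega
    rw [e, bpref_cons n (show a < a + 1 + d by omega)]
    have h2 := ih (a + 1) b (by omega)
    calc bgen n a * bpref n (a + 1) (a + 1 + d) * halfTwist n (a + 1 + d) b *
          (bgen n a * bpref n (a + 1) (a + 1 + d))⁻¹
        = bgen n a * (bpref n (a + 1) (a + 1 + d) * halfTwist n (a + 1 + d) b *
            (bpref n (a + 1) (a + 1 + d))⁻¹) * (bgen n a)⁻¹ := by group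
      _ = bgen n a * halfTwist n (a + 1) b * (bgen n a)⁻¹ := by rw [h2]
      _ = halfTwist n a b := (ht_cons n (by omega)).symm

lemma conj_ht (n : ℕ) {a c b : ℕ} (h1 : a ≤ c) (h2 : c < b) :
    bpref n a c * halfTwist n c b * (bpref n a c)⁻¹ = halfTwist n a b := by
  obtain ⟨d, rfl⟩ := Nat.exists_eq_add_of_le h1
  exact conj_ht_aux n d a b h2

lemma braid_ht (n : ℕ) : ∀ (d c b : ℕ), 1 ≤ c → b = c + 1 + d → b < n →
    bgen n (c - 1) * halfTwist n c b * bgen n (c - 1) =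
      halfTwist n c b * bgen n (c - 1) * halfTwist n c b := by
  intro d
  induction d with
  | zero =>
    intro c b hc hb hbn
    subst hb
    rw [ht_base n c]
    have e : c - 1 + 1 = c := by omega
    have := bgen_braid n (t := c - 1) (by omega)
    rw [e] at this
    exact this
  | succ d ih =>
    intro c b hc hb hbn
    have hcb : c + 1 < b := by omega
    have h3 := ih (c + 1) b (by omega) (by omega) hbn
    have e : c + 1 - 1 = c := by omega
    rw [e] at h3
    have h1 := bgen_braid n (t := c - 1) (by omega)
    have e2 : c - 1 + 1 = c := by omega
    rw [e2] at h1
    have h2 : Commute (bgen n (c - 1)) (halfTwist n (c + 1) b) :=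
      comm_bgen_ht n (by omega) hcb
    rw [ht_cons n hcb]
    set u := bgen n (c - 1)
    set v := bgen n c
    set W := halfTwist n (c + 1) b
    have h4 : v⁻¹ * u * v = u * v * u⁻¹ := by
      calc v⁻¹ * u * v = v⁻¹ * (u * v * u) * u⁻¹ := by group
        _ = v⁻¹ * (v * u * v) * u⁻¹ := by rw [h1]
        _ = u * v * u⁻¹ := by group
    calc u * (v * W * v⁻¹) * u
        = u * v * W * (v⁻¹ * u * v) * v⁻¹ := by group
      _ = u * v * W * (u * v * u⁻¹) * v⁻¹ := by rw [h4]
      _ = u * v * (W * u) * (v * (u⁻¹ * v⁻¹)) := by group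
      _ = u * v * (u * W) * (v * (u⁻¹ * v⁻¹)) := by rw [← h2.eq]
      _ = u * v * u * (W * (v * (u⁻¹ * v⁻¹))) := by group
      _ = v * u * v * (W * (v * (u⁻¹ * v⁻¹))) := by rw [h1]
      _ = v * u * (v * W * v) * (u⁻¹ * v⁻¹) := by group
      _ = v * u * (W * v * W) * (u⁻¹ * v⁻¹) := by rw [h3]
      _ = v * (u * W) * (v * (W * u⁻¹)) * v⁻¹ := by group
      _ = v * (W * u) * (v * (W * u⁻¹)) * v⁻¹ := by rw [h2.eq]
      _ = v * (W * u) * (v * (u⁻¹ * W)) * v⁻¹ := by rw [h2.inv_left.eq]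
      _ = v * W * (u * v * u⁻¹) * W * v⁻¹ := by group
      _ = v * W * (v⁻¹ * u * v) * W * v⁻¹ := by rw [← h4]
      _ = v * W * v⁻¹ * u * (v * W * v⁻¹) := by group

lemma chain1 (n : ℕ) {a c b : ℕ} (h1 : a < c) (h2 : c < b) :
    halfTwist n a b * halfTwist n a c = halfTwist n a c * halfTwist n c b := by
  have hC := conj_ht n (le_of_lt h1) h2
  have hP := ht_pref n h1
  have hcomm : Commute (bpref n a (c - 1)) (halfTwist n c b) :=
    comm_bpref_ht n (by omega) h2
  have hTac : halfTwist n a c = bpref n a c * (bpref n a (c - 1))⁻¹ := by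
    rw [← hP]; group
  calc halfTwist n a b * halfTwist n a c
      = (bpref n a c * halfTwist n c b * (bpref n a c)⁻¹) *
          (bpref n a c * (bpref n a (c - 1))⁻¹) := by rw [hC, ← hTac]
    _ = bpref n a c * (halfTwist n c b * (bpref n a (c - 1))⁻¹) := by group
    _ = bpref n a c * ((bpref n a (c - 1))⁻¹ * halfTwist n c b) := by
        rw [← hcomm.inv_left.eq]
    _ = (bpref n a c * (bpref n a (c - 1))⁻¹) * halfTwist n c b := by group
    _ = halfTwist n a c * halfTwist n c b := by rw [← hTac]

lemma chain2 (n : ℕ) {a c b : ℕ} (h1 : a < c) (h2 : c < b) (hb : b < n) :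
    halfTwist n c b * halfTwist n a b = halfTwist n a c * halfTwist n c b := by
  have hC := conj_ht n (le_of_lt h1) h2
  have hcomm : Commute (bpref n a (c - 1)) (halfTwist n c b) :=
    comm_bpref_ht n (by omega) h2
  have hBR := braid_ht n (b - c - 1) c b (by omega) (by omega) hb
  have hsplit : bpref n a c = bpref n a (c - 1) * bgen n (c - 1) := by
    conv_lhs => rw [show c = (c - 1) + 1 by omega]
    rw [bpref_concat n (show a ≤ c - 1 by omega)]
  set p := bpref n a (c - 1)
  set u := bgen n (c - 1)
  set T := halfTwist n c b
  calc T * halfTwist n a b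
      = T * (bpref n a c * T * (bpref n a c)⁻¹) := by rw [hC]
    _ = T * (p * u * T * (u⁻¹ * p⁻¹)) := by rw [hsplit]; group
    _ = (T * p) * (u * T * (u⁻¹ * p⁻¹)) := by group
    _ = (p * T) * (u * T * (u⁻¹ * p⁻¹)) := by rw [← hcomm.eq]
    _ = p * (T * u * T) * (u⁻¹ * p⁻¹) := by group
    _ = p * (u * T * u) * (u⁻¹ * p⁻¹) := by rw [hBR]
    _ = p * u * (T * p⁻¹) := by group
    _ = p * u * (p⁻¹ * T) := by rw [hcomm.inv_left.eq]
    _ = (p * u * p⁻¹) * T := by group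
    _ = halfTwist n a c * T := by rw [halfTwist]

lemma relE1 (n : ℕ) {a c b : ℕ} (h1 : a < c) (h2 : c < b) (hb : b < n) :
    (halfTwist n a b)⁻¹ * halfTwist n c b * halfTwist n a b = halfTwist n a c := by
  have h := (chain2 n h1 h2 hb).trans (chain1 n h1 h2).symm
  calc (halfTwist n a b)⁻¹ * halfTwist n c b * halfTwist n a b
      = (halfTwist n a b)⁻¹ * (halfTwist n c b * halfTwist n a b) := by group
    _ = (halfTwist n a b)⁻¹ * (halfTwist n a b * halfTwist n a c) := by rw [h]
    _ = halfTwist n a c := by group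

lemma relE2 (n : ℕ) {a c b : ℕ} (h1 : a < c) (h2 : c < b) (hb : b < n) :
    (halfTwist n c b)⁻¹ * halfTwist n a c * halfTwist n c b = halfTwist n a b := by
  have h := chain2 n h1 h2 hb
  calc (halfTwist n c b)⁻¹ * halfTwist n a c * halfTwist n c b
      = (halfTwist n c b)⁻¹ * (halfTwist n a c * halfTwist n c b) := by group
    _ = (halfTwist n c b)⁻¹ * (halfTwist n c b * halfTwist n a b) := by rw [← h]
    _ = halfTwist n a b := by group

lemma relE3 (n : ℕ) {a c b : ℕ} (h1 : a < c) (h2 : c < b) :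
    (halfTwist n a c)⁻¹ * halfTwist n a b * halfTwist n a c = halfTwist n c b := by
  have h := chain1 n h1 h2
  calc (halfTwist n a c)⁻¹ * halfTwist n a b * halfTwist n a c
      = (halfTwist n a c)⁻¹ * (halfTwist n a b * halfTwist n a c) := by group
    _ = (halfTwist n a c)⁻¹ * (halfTwist n a c * halfTwist n c b) := by rw [h]
    _ = halfTwist n c b := by group


lemma sq_mem_ker (n : ℕ) (π : BraidGroup n →* Equiv.Perm (Fin n)) (hgen : IsBraidProj n π)
    {a b : ℕ} (hab : a < b) (hb : b < n) : (halfTwist n a b) ^ 2 ∈ π.ker := by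
  have hb1 : b - 1 < n - 1 := by omega
  have hs : π (bgen n (b - 1)) = Equiv.swap ⟨b - 1, by omega⟩ ⟨b - 1 + 1, by omega⟩ := by
    rw [bgen, dif_pos hb1]
    exact hgen ⟨b - 1, hb1⟩
  have he : (halfTwist n a b) ^ 2 =
      bpref n a (b - 1) * (bgen n (b - 1) * bgen n (b - 1)) * (bpref n a (b - 1))⁻¹ := by
    rw [sq, halfTwist]; group
  rw [MonoidHom.mem_ker, he, map_mul, map_mul, map_mul, map_inv, hs, Equiv.swap_mul_self,
    mul_one, mul_inv_cancel]

open scoped commutatorElement in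
lemma mk_conj (n : ℕ) (π : BraidGroup n →* Equiv.Perm (Fin n)) {p q : BraidGroup n}
    (hp : p ∈ π.ker) (hq : q ∈ π.ker) :
    (QuotientGroup.mk (q * p * q⁻¹) : Gq n π) = QuotientGroup.mk p := by
  rw [QuotientGroup.eq]
  have h : (q * p * q⁻¹)⁻¹ * p = ⁅q, p⁻¹⁆ := by rw [commutatorElement_def]; group
  rw [h]
  exact Subgroup.commutator_mem_commutator hq (Subgroup.inv_mem _ hp)

lemma assemble (n : ℕ) (π : BraidGroup n →* Equiv.Perm (Fin n)) {X Y Z : BraidGroup n}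
    (Ra : X⁻¹ * Y * X = Z) (Rb : Z⁻¹ * X * Z = Y)
    (kX : X ^ 2 ∈ π.ker) (kY : Y ^ 2 ∈ π.ker) (kZ : Z ^ 2 ∈ π.ker) :
    ((QuotientGroup.mk X : Gq n π) * QuotientGroup.mk Y * (QuotientGroup.mk X)⁻¹ *
        (QuotientGroup.mk Z)⁻¹ =
      QuotientGroup.mk (X ^ 2) * (QuotientGroup.mk (Y ^ 2))⁻¹) ∧
    (QuotientGroup.mk X : Gq n π)⁻¹ * QuotientGroup.mk Y * QuotientGroup.mk X =
      QuotientGroup.mk Z := by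
  have hY : Y = X * Z * X⁻¹ := by rw [← Ra]; group
  constructor
  · have hx : Z⁻¹ * X ^ 2 * Z = Y ^ 2 := by
      rw [sq, sq, ← Rb]; group
    have key : (QuotientGroup.mk (Z * X ^ 2 * Z⁻¹) : Gq n π) = QuotientGroup.mk (Y ^ 2) := by
      have h1 : Z * X ^ 2 * Z⁻¹ = Z ^ 2 * Y ^ 2 * (Z ^ 2)⁻¹ := by
        rw [← hx]; simp only [sq]; group
      rw [h1]
      exact mk_conj n π kY kZ
    have w : X * Y * X⁻¹ * Z⁻¹ = X ^ 2 * (Z * X ^ 2 * Z⁻¹)⁻¹ := by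
      rw [hY]; simp only [sq]; group
    calc (QuotientGroup.mk X : Gq n π) * QuotientGroup.mk Y * (QuotientGroup.mk X)⁻¹ *
          (QuotientGroup.mk Z)⁻¹
        = QuotientGroup.mk (X * Y * X⁻¹ * Z⁻¹) := by
          rw [← QuotientGroup.mk_inv, ← QuotientGroup.mk_inv, ← QuotientGroup.mk_mul,
            ← QuotientGroup.mk_mul, ← QuotientGroup.mk_mul]
      _ = QuotientGroup.mk (X ^ 2) * (QuotientGroup.mk (Z * X ^ 2 * Z⁻¹) : Gq n π)⁻¹ := by
          rw [w, QuotientGroup.mk_mul, QuotientGroup.mk_inv]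
      _ = QuotientGroup.mk (X ^ 2) * (QuotientGroup.mk (Y ^ 2))⁻¹ := by rw [key]
  · rw [← QuotientGroup.mk_inv, ← QuotientGroup.mk_mul, ← QuotientGroup.mk_mul, Ra]

end St10

/-- In `G_n = B_n/[PB_n, PB_n]`, for `i<k<j`, `j<i<k`, or `k<j<i`,
`σ̃_{i,j} σ̃_{j,k} σ̃_{i,j}⁻¹ σ̃_{i,k}⁻¹ = g_{i,j} g_{k,j}⁻¹`, and equivalently
`σ̃_{i,j}⁻¹ σ̃_{j,k} σ̃_{i,j} = σ̃_{i,k}`. -/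
theorem statement10 (n : ℕ) (π : BraidGroup n →* Equiv.Perm (Fin n))
    (hgen : IsBraidProj n π) (hsurj : Function.Surjective π)
    (i j k : ℕ) (hi : i < n) (hj : j < n) (hk : k < n)
    (horder : (i < k ∧ k < j) ∨ (j < i ∧ i < k) ∨ (k < j ∧ j < i)) :
    ht n π i j * ht n π j k * (ht n π i j)⁻¹ * (ht n π i k)⁻¹ =
      ft n π i j * (ft n π k j)⁻¹ ∧
    (ht n π i j)⁻¹ * ht n π j k * ht n π i j = ht n π i k := by
  have hbb : bb n j k = bb n k j := by rw [bb, bb, min_comm, max_comm]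
  rcases horder with ⟨h1, h2⟩ | ⟨h1, h2⟩ | ⟨h1, h2⟩
  · have eX : bb n i j = halfTwist n i j := by
      rw [bb, min_eq_left (by omega), max_eq_right (by omega)]
    have eY : bb n k j = halfTwist n k j := by
      rw [bb, min_eq_left (by omega), max_eq_right (by omega)]
    have eZ : bb n i k = halfTwist n i k := by
      rw [bb, min_eq_left (by omega), max_eq_right (by omega)]
    have Ra := St10.relE1 n h1 h2 hj
    have Rb := St10.relE3 n h1 h2
    have kX := St10.sq_mem_ker n π hgen (show i < j by omega) hj
    have kY := St10.sq_mem_ker n π hgen (show k < j by omega) hj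
    have kZ := St10.sq_mem_ker n π hgen (show i < k by omega) hk
    simp only [ht, ft, hbb, eX, eY, eZ]
    exact St10.assemble n π Ra Rb kX kY kZ
  · have eX : bb n i j = halfTwist n j i := by
      rw [bb, min_eq_right (by omega), max_eq_left (by omega)]
    have eY : bb n k j = halfTwist n j k := by
      rw [bb, min_eq_right (by omega), max_eq_left (by omega)]
    have eZ : bb n i k = halfTwist n i k := by
      rw [bb, min_eq_left (by omega), max_eq_right (by omega)]
    have Ra := St10.relE3 n h1 h2
    have Rb := St10.relE2 n h1 h2 hk
    have kX := St10.sq_mem_ker n π hgen (show j < i by omega) hi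
    have kY := St10.sq_mem_ker n π hgen (show j < k by omega) hk
    have kZ := St10.sq_mem_ker n π hgen (show i < k by omega) hk
    simp only [ht, ft, hbb, eX, eY, eZ]
    exact St10.assemble n π Ra Rb kX kY kZ
  · have eX : bb n i j = halfTwist n j i := by
      rw [bb, min_eq_right (by omega), max_eq_left (by omega)]
    have eY : bb n k j = halfTwist n k j := by
      rw [bb, min_eq_left (by omega), max_eq_right (by omega)]
    have eZ : bb n i k = halfTwist n k i := by
      rw [bb, min_eq_right (by omega), max_eq_left (by omega)]
    have Ra := St10.relE2 n h1 h2 hi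
    have Rb := St10.relE1 n h1 h2 hi
    have kX := St10.sq_mem_ker n π hgen (show j < i by omega) hi
    have kY := St10.sq_mem_ker n π hgen (show k < j by omega) hj
    have kZ := St10.sq_mem_ker n π hgen (show k < i by omega) hi
    simp only [ht, ft, hbb, eX, eY, eZ]
    exact St10.assemble n π Ra Rb kX kY kZ
end

section
/- The 2-cocycle φ on the truncated resolution R₂ with values in ℤ^(n choose 2), defined by φ(c̃_{i,j}) = g_{i,j}; φ(d̃_{i,j,k,ℓ}) = g_{i,k} − g_{i,ℓ} − g_{k,j} + g_{j,ℓ} if i < k < j < ℓ, = −g_{i,k} + g_{k,j} + g_{i,ℓ} − g_{ℓ,j} if k < i < ℓ < j, and 0 otherwise; and φ(ẽ_{i,k,j}) = g_{i,j} − g_{k,j} if i < k < j, j < i < k, or k < j < i, and 0 otherwise — represents the cohomology class in H²(S_n; ℤ^(n choose 2)) classifying the extension 0 → ℤ^(n choose 2) → G_n → S_n → 1. -/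
lemma rel_eq_one {n : ℕ} {r : FreeGroup (Fin (n-1))} (h : r ∈ braidRels n) :
    (QuotientGroup.mk r : BraidGroup n) = 1 := by
  rw [QuotientGroup.eq_one_iff]
  exact Subgroup.subset_normalClosure h

lemma bgen_comm {n : ℕ} {a b : ℕ} (h : a + 2 ≤ b) :
    bgen n a * bgen n b = bgen n b * bgen n a := by
  unfold bgen
  by_cases ha : a < n - 1
  · by_cases hb : b < n - 1
    · simp only [dif_pos ha, dif_pos hb]
      have hrel : (FreeGroup.of (⟨a, ha⟩ : Fin (n-1)) * FreeGroup.of (⟨b, hb⟩ : Fin (n-1)) *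
          (FreeGroup.of (⟨b, hb⟩ : Fin (n-1)) * FreeGroup.of (⟨a, ha⟩ : Fin (n-1)))⁻¹) ∈ braidRels n :=
        ⟨⟨a, ha⟩, ⟨b, hb⟩, Or.inr ⟨by show a + 1 < b; omega, rfl⟩⟩
      have h1 := rel_eq_one hrel
      have h2 : (QuotientGroup.mk (FreeGroup.of (⟨a, ha⟩ : Fin (n-1)) * FreeGroup.of (⟨b, hb⟩ : Fin (n-1)) *
          (FreeGroup.of (⟨b, hb⟩ : Fin (n-1)) * FreeGroup.of (⟨a, ha⟩ : Fin (n-1)))⁻¹) : BraidGroup n) =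
          PresentedGroup.of (⟨a, ha⟩ : Fin (n-1)) * PresentedGroup.of (⟨b, hb⟩ : Fin (n-1)) *
          (PresentedGroup.of (⟨b, hb⟩ : Fin (n-1)) * PresentedGroup.of (⟨a, ha⟩ : Fin (n-1)))⁻¹ := rfl
      rw [h2] at h1
      exact mul_inv_eq_one.mp h1
    · simp [dif_pos ha, dif_neg hb]
  · simp [dif_neg ha]

lemma bgen_braid {n : ℕ} {a : ℕ} (h : a + 1 < n - 1) :
    bgen n a * bgen n (a+1) * bgen n a = bgen n (a+1) * bgen n a * bgen n (a+1) := by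
  have ha : a < n - 1 := by omega
  unfold bgen
  simp only [dif_pos ha, dif_pos h]
  have hrel : (FreeGroup.of (⟨a, ha⟩ : Fin (n-1)) * FreeGroup.of (⟨a+1, h⟩ : Fin (n-1)) *
      FreeGroup.of (⟨a, ha⟩ : Fin (n-1)) *
      (FreeGroup.of (⟨a+1, h⟩ : Fin (n-1)) * FreeGroup.of (⟨a, ha⟩ : Fin (n-1)) *
        FreeGroup.of (⟨a+1, h⟩ : Fin (n-1)))⁻¹) ∈ braidRels n :=
    ⟨⟨a, ha⟩, ⟨a+1, h⟩, Or.inl ⟨rfl, rfl⟩⟩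
  have h1 := rel_eq_one hrel
  have h2 : (QuotientGroup.mk (FreeGroup.of (⟨a, ha⟩ : Fin (n-1)) * FreeGroup.of (⟨a+1, h⟩ : Fin (n-1)) *
      FreeGroup.of (⟨a, ha⟩ : Fin (n-1)) *
      (FreeGroup.of (⟨a+1, h⟩ : Fin (n-1)) * FreeGroup.of (⟨a, ha⟩ : Fin (n-1)) *
        FreeGroup.of (⟨a+1, h⟩ : Fin (n-1)))⁻¹) : BraidGroup n) =
      PresentedGroup.of (⟨a, ha⟩ : Fin (n-1)) * PresentedGroup.of (⟨a+1, h⟩ : Fin (n-1)) *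
      PresentedGroup.of (⟨a, ha⟩ : Fin (n-1)) *
      (PresentedGroup.of (⟨a+1, h⟩ : Fin (n-1)) * PresentedGroup.of (⟨a, ha⟩ : Fin (n-1)) *
        PresentedGroup.of (⟨a+1, h⟩ : Fin (n-1)))⁻¹ := rfl
  rw [h2] at h1
  exact mul_inv_eq_one.mp h1




lemma bpref_eq_one {n i j : ℕ} (h : j ≤ i) : bpref n i j = 1 := by
  unfold bpref
  have : j - i = 0 := by omega
  simp [this]

lemma bpref_succ_right {n : ℕ} {i j : ℕ} (h : i < j) :
    bpref n i j = bpref n i (j-1) * bgen n (j-1) := by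
  unfold bpref
  have h1 : j - i = (j - 1 - i) + 1 := by omega
  have h2 : i + (j - 1 - i) = j - 1 := by omega
  rw [h1, List.range'_1_concat, h2, List.map_append, List.prod_append]
  simp

lemma bpref_succ_left {n : ℕ} {i j : ℕ} (h : i < j) :
    bpref n i j = bgen n i * bpref n (i+1) j := by
  unfold bpref
  have h1 : j - i = (j - (i+1)) + 1 := by omega
  rw [h1, List.range'_succ]
  simp

lemma bpref_append {n : ℕ} {i j k : ℕ} (h1 : i ≤ j) (h2 : j ≤ k) :
    bpref n i k = bpref n i j * bpref n j k := by
  unfold bpref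
  have h3 : k - i = (k - j) + (j - i) := by omega
  have h4 : i + (j - i) = j := by omega
  rw [h3, ← Nat.add_comm (j - i) (k - j), ← List.range'_append_1 (s := i) (m := j - i) (n := k - j), h4, List.map_append, List.prod_append]

lemma commute_bgen_bpref {n t i j : ℕ} (h : t + 2 ≤ i ∨ j + 1 ≤ t) :
    Commute (bgen n t) (bpref n i j) := by
  unfold bpref
  apply Commute.list_prod_right
  intro y hy
  simp only [List.mem_map] at hy
  obtain ⟨m, hm, rfl⟩ := hy
  rw [List.mem_range'_1] at hm
  rcases h with h | h
  · exact bgen_comm (show t + 2 ≤ m by omega)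
  · exact (bgen_comm (show m + 2 ≤ t by omega)).symm

lemma commute_bgen_halfTwist {n t i j : ℕ} (hij : i < j) (h : t + 2 ≤ i ∨ j + 1 ≤ t) :
    Commute (bgen n t) (halfTwist n i j) := by
  unfold halfTwist
  have h1 : Commute (bgen n t) (bpref n i (j-1)) := by
    apply commute_bgen_bpref; omega
  have h2 : Commute (bgen n t) (bgen n (j-1)) := by
    rcases h with h | h
    · exact bgen_comm (show t + 2 ≤ j - 1 by omega)
    · exact (bgen_comm (show (j-1) + 2 ≤ t by omega)).symm
  exact (h1.mul_right h2).mul_right h1.inv_right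

lemma commute_bpref_halfTwist {n a b k l : ℕ} (hkl : k < l) (h : b + 1 ≤ k ∨ l + 2 ≤ a) :
    Commute (bpref n a b) (halfTwist n k l) := by
  unfold bpref
  apply Commute.list_prod_left
  intro y hy
  simp only [List.mem_map] at hy
  obtain ⟨m, hm, rfl⟩ := hy
  rw [List.mem_range'_1] at hm
  apply commute_bgen_halfTwist hkl
  omega

lemma commute_halfTwist_unlinked {n i j k l : ℕ} (hij : i < j) (hjk : j < k) (hkl : k < l) :
    Commute (halfTwist n i j) (halfTwist n k l) := by
  rw [halfTwist]
  have h1 : Commute (bpref n i (j-1)) (halfTwist n k l) :=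
    commute_bpref_halfTwist hkl (by omega)
  have h2 : Commute (bgen n (j-1)) (halfTwist n k l) :=
    commute_bgen_halfTwist hkl (by omega)
  exact (h1.mul_left h2).mul_left h1.inv_left

lemma bpref_slide {n i t j : ℕ} (hit : i ≤ t) (htj : t + 2 ≤ j) (hjn : j < n) :
    bpref n i j * bgen n t = bgen n (t+1) * bpref n i j := by
  have hsplit : bpref n i j = bpref n i t * (bgen n t * (bgen n (t+1) * bpref n (t+2) j)) := by
    rw [bpref_append hit (show t ≤ j by omega), bpref_succ_left (show t < j by omega),
      bpref_succ_left (show t + 1 < j by omega)]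
  have c1 : Commute (bgen n t) (bpref n (t+2) j) := commute_bgen_bpref (Or.inl (by omega))
  have c2 : Commute (bgen n (t+1)) (bpref n i t) := commute_bgen_bpref (Or.inr (by omega))
  have braid := bgen_braid (n := n) (a := t) (by omega)
  calc bpref n i j * bgen n t
      = bpref n i t * (bgen n t * (bgen n (t+1) * (bgen n t * bpref n (t+2) j))) := by
        rw [hsplit]; simp only [mul_assoc]; rw [← c1.eq]
    _ = bpref n i t * (bgen n (t+1) * (bgen n t * (bgen n (t+1) * bpref n (t+2) j))) := by
        congr 1; simp only [← mul_assoc]; rw [braid]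
    _ = bgen n (t+1) * bpref n i j := by
        rw [hsplit, ← mul_assoc, ← c2.eq, mul_assoc]

lemma halfTwist_adj {n i : ℕ} : halfTwist n i (i+1) = bgen n i := by
  unfold halfTwist
  simp [bpref_eq_one (le_refl i)]

lemma halfTwist_succ_left {n i j : ℕ} (h : i + 1 < j) :
    halfTwist n i j = bgen n i * halfTwist n (i+1) j * (bgen n i)⁻¹ := by
  unfold halfTwist
  rw [bpref_succ_left (show i < j - 1 by omega)]
  group

lemma halfTwist_succ_right {n i j : ℕ} (hij : i < j) (hjn : j + 1 < n) :
    halfTwist n i (j+1) = (bgen n j)⁻¹ * halfTwist n i j * bgen n j := by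
  have hbraid := bgen_braid (n := n) (a := j-1) (by omega)
  have h1 : j - 1 + 1 = j := by omega
  rw [h1] at hbraid
  -- hbraid : s_{j-1} s_j s_{j-1} = s_j s_{j-1} s_j
  have hkey : bgen n (j-1) * bgen n j * (bgen n (j-1))⁻¹
      = (bgen n j)⁻¹ * (bgen n (j-1) * bgen n j) := by
    have h3 : bgen n j * (bgen n (j-1) * bgen n j * (bgen n (j-1))⁻¹) = bgen n (j-1) * bgen n j := by
      calc bgen n j * (bgen n (j-1) * bgen n j * (bgen n (j-1))⁻¹)
          = (bgen n j * bgen n (j-1) * bgen n j) * (bgen n (j-1))⁻¹ := by group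
        _ = (bgen n (j-1) * bgen n j * bgen n (j-1)) * (bgen n (j-1))⁻¹ := by rw [hbraid]
        _ = bgen n (j-1) * bgen n j := by group
    apply mul_left_cancel (a := bgen n j)
    rw [h3]; group
  have hc : Commute (bgen n j) (bpref n i (j-1)) := commute_bgen_bpref (Or.inr (by omega))
  unfold halfTwist
  have h2 : j + 1 - 1 = j := by omega
  rw [h2, bpref_succ_right (show i < j by omega)]
  calc bpref n i (j-1) * bgen n (j-1) * bgen n j * (bpref n i (j-1) * bgen n (j-1))⁻¹
      = bpref n i (j-1) * (bgen n (j-1) * bgen n j * (bgen n (j-1))⁻¹) * (bpref n i (j-1))⁻¹ := by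
        group
    _ = bpref n i (j-1) * ((bgen n j)⁻¹ * (bgen n (j-1) * bgen n j)) * (bpref n i (j-1))⁻¹ := by
        rw [hkey]
    _ = (bpref n i (j-1) * (bgen n j)⁻¹) * bgen n (j-1) * (bgen n j * (bpref n i (j-1))⁻¹) := by
        group
    _ = ((bgen n j)⁻¹ * bpref n i (j-1)) * bgen n (j-1) * ((bpref n i (j-1))⁻¹ * bgen n j) := by
        rw [← hc.inv_left.eq, hc.inv_right.eq]
    _ = (bgen n j)⁻¹ * (bpref n i (j-1) * bgen n (j-1) * (bpref n i (j-1))⁻¹) * bgen n j := by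
        group

lemma swap_inv_of {G : Type*} [Group G] {a x y : G} (h : a * x = y * a) : a * x⁻¹ = y⁻¹ * a := by
  have hy : y = a * x * a⁻¹ := by rw [h]; group
  rw [hy]; group

lemma swap_inv_left {G : Type*} [Group G] {a x y : G} (h : a * x = y * a) : a⁻¹ * y = x * a⁻¹ := by
  have hx : x = a⁻¹ * y * a := by rw [mul_assoc, ← h]; group
  rw [hx]; group

lemma bpref_shift {n k i j l : ℕ} (hki : k ≤ i) (hij : i ≤ j) (hjl : j + 1 ≤ l) (hln : l < n) :
    bpref n k l * bpref n i j = bpref n (i+1) (j+1) * bpref n k l := by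
  induction j, hij using Nat.le_induction with
  | base =>
    rw [bpref_eq_one (le_refl i), bpref_eq_one (le_refl (i+1))]
    group
  | succ j hij ih =>
    have ih' := ih (by omega)
    rw [bpref_succ_right (show i < j + 1 by omega)]
    have h1 : j + 1 - 1 = j := by omega
    rw [h1, ← mul_assoc, ih']
    rw [mul_assoc, bpref_slide (show k ≤ j by omega) (by omega) hln]
    rw [bpref_succ_right (show i + 1 < j + 1 + 1 by omega)]
    have h2 : j + 1 + 1 - 1 = j + 1 := by omega
    rw [h2]
    group

lemma halfTwist_shift {n k i j l : ℕ} (hki : k ≤ i) (hij : i < j) (hjl : j + 1 ≤ l) (hln : l < n) :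
    bpref n k l * halfTwist n i j = halfTwist n (i+1) (j+1) * bpref n k l := by
  unfold halfTwist
  have h1 : j + 1 - 1 = j := by omega
  rw [h1]
  have hshift := bpref_shift (n := n) hki (show i ≤ j - 1 by omega) (show (j-1) + 1 ≤ l by omega) hln
  have h2 : j - 1 + 1 = j := by omega
  rw [h2] at hshift
  have hslide := bpref_slide (show k ≤ j - 1 by omega) (show (j-1) + 2 ≤ l by omega) hln
  rw [h2] at hslide
  calc bpref n k l * (bpref n i (j-1) * bgen n (j-1) * (bpref n i (j-1))⁻¹)
      = (bpref n k l * bpref n i (j-1)) * bgen n (j-1) * (bpref n i (j-1))⁻¹ := by group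
    _ = bpref n (i+1) j * (bpref n k l * bgen n (j-1)) * (bpref n i (j-1))⁻¹ := by
        rw [hshift]; group
    _ = bpref n (i+1) j * bgen n j * (bpref n k l * (bpref n i (j-1))⁻¹) := by
        rw [hslide]; group
    _ = bpref n (i+1) j * bgen n j * ((bpref n (i+1) j)⁻¹ * bpref n k l) := by
        congr 1
        exact swap_inv_of hshift
    _ = bpref n (i+1) j * bgen n j * (bpref n (i+1) j)⁻¹ * bpref n k l := by group

lemma halfTwist_eq_pp {n i j : ℕ} (h : i < j) :
    halfTwist n i j = bpref n i j * (bpref n i (j-1))⁻¹ := by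
  unfold halfTwist
  rw [bpref_succ_right h]

lemma halfTwist_nested {n k i j l : ℕ} (hki : k < i) (hij : i < j) (hjl : j < l) (hln : l < n) :
    Commute (halfTwist n k l) (halfTwist n i j) := by
  have e1 : i - 1 + 1 = i := by omega
  have e2 : j - 1 + 1 = j := by omega
  have s1 := halfTwist_shift (n := n) (k := k) (i := i-1) (j := j-1) (l := l-1)
    (by omega) (by omega) (by omega) (by omega)
  rw [e1, e2] at s1
  have s2 := halfTwist_shift (n := n) (k := k) (i := i-1) (j := j-1) (l := l)
    (by omega) (by omega) (by omega) (by omega)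
  rw [e1, e2] at s2
  unfold Commute SemiconjBy
  rw [halfTwist_eq_pp (show k < l by omega)]
  calc bpref n k l * (bpref n k (l-1))⁻¹ * halfTwist n i j
      = bpref n k l * (halfTwist n (i-1) (j-1) * (bpref n k (l-1))⁻¹) := by
        rw [mul_assoc]
        congr 1
        exact swap_inv_left s1
    _ = halfTwist n i j * (bpref n k l * (bpref n k (l-1))⁻¹) := by
        rw [← mul_assoc, s2]; group

lemma band2 {n r s t : ℕ} (hrs : r < s) (hst : s < t) (htn : t < n) :
    halfTwist n r s * halfTwist n s t = halfTwist n s t * halfTwist n r t := by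
  induction t, hst using Nat.le_induction with
  | base =>
    rw [halfTwist_adj, halfTwist_succ_right hrs (by omega)]
    group
  | succ t hst ih =>
    have ih' := ih (by omega)
    have hc : Commute (bgen n t) (halfTwist n r s) :=
      (commute_bgen_halfTwist hrs (Or.inr (by omega)))
    rw [halfTwist_succ_right (show s < t by omega) (by omega),
        halfTwist_succ_right (show r < t by omega) (by omega)]
    calc halfTwist n r s * ((bgen n t)⁻¹ * halfTwist n s t * bgen n t)
        = (halfTwist n r s * (bgen n t)⁻¹) * halfTwist n s t * bgen n t := by group
      _ = ((bgen n t)⁻¹ * halfTwist n r s) * halfTwist n s t * bgen n t := by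
          rw [← hc.inv_left.eq]
      _ = (bgen n t)⁻¹ * (halfTwist n s t * halfTwist n r t) * bgen n t := by
          rw [mul_assoc ((bgen n t)⁻¹), ih']
      _ = (bgen n t)⁻¹ * halfTwist n s t * bgen n t * ((bgen n t)⁻¹ * halfTwist n r t * bgen n t) := by
          group

lemma band1 {n r s t : ℕ} (hrs : r < s) (hst : s < t) (htn : t < n) :
    halfTwist n r s * halfTwist n s t = halfTwist n r t * halfTwist n r s := by
  have key : ∀ d r, r < s → s - 1 - r = d →
      halfTwist n r s * halfTwist n s t = halfTwist n r t * halfTwist n r s := by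
    intro d
    induction d with
    | zero =>
      intro r hrs hd
      have hr : s = r + 1 := by omega
      subst hr
      rw [halfTwist_adj]
      conv_rhs => rw [halfTwist_succ_left (show r + 1 < t by omega)]
      group
    | succ d ih =>
      intro r hrs hd
      have hr1 : r + 1 < s := by omega
      have ih' := ih (r+1) hr1 (by omega)
      have e1 : halfTwist n r s = bgen n r * halfTwist n (r+1) s * (bgen n r)⁻¹ :=
        halfTwist_succ_left hr1
      have e2 : halfTwist n r t = bgen n r * halfTwist n (r+1) t * (bgen n r)⁻¹ :=
        halfTwist_succ_left (by omega)
      have hc : Commute (bgen n r) (halfTwist n s t) := commute_bgen_halfTwist hst (Or.inl (by omega))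
      calc halfTwist n r s * halfTwist n s t
          = bgen n r * halfTwist n (r+1) s * ((bgen n r)⁻¹ * halfTwist n s t) := by rw [e1]; group
        _ = bgen n r * halfTwist n (r+1) s * (halfTwist n s t * (bgen n r)⁻¹) := by
            rw [hc.inv_left.eq]
        _ = bgen n r * (halfTwist n (r+1) s * halfTwist n s t) * (bgen n r)⁻¹ := by group
        _ = bgen n r * (halfTwist n (r+1) t * halfTwist n (r+1) s) * (bgen n r)⁻¹ := by rw [ih']
        _ = halfTwist n r t * halfTwist n r s := by rw [e1, e2]; group
  exact key _ r hrs rfl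





noncomputable def Aq (n : ℕ) (π : BraidGroup n →* Equiv.Perm (Fin n)) (a b : ℕ) : Gq n π :=
  QuotientGroup.mk (halfTwist n a b)

section Gsec

variable {n : ℕ} {π : BraidGroup n →* Equiv.Perm (Fin n)}

lemma bb_eq_halfTwist {a b : ℕ} (h : a < b) : bb n a b = halfTwist n a b := by
  unfold bb
  rw [min_eq_left (le_of_lt h), max_eq_right (le_of_lt h)]

lemma bb_symm (a b : ℕ) : bb n a b = bb n b a := by
  unfold bb; rw [min_comm, max_comm]

lemma ht_eq_Aq {a b : ℕ} (h : a < b) : ht n π a b = Aq n π a b := by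
  unfold ht Aq; rw [bb_eq_halfTwist h]

lemma ht_symm (a b : ℕ) : ht n π a b = ht n π b a := by
  unfold ht; rw [bb_symm]

lemma ft_eq_Aq_sq {a b : ℕ} (h : a < b) : ft n π a b = (Aq n π a b)^2 := by
  unfold ft Aq
  rw [bb_eq_halfTwist h, sq, QuotientGroup.mk_mul, ← sq]

lemma ft_symm (a b : ℕ) : ft n π a b = ft n π b a := by
  unfold ft; rw [bb_symm]

lemma Aq_mul (x y : BraidGroup n) :
    (QuotientGroup.mk (x * y) : Gq n π) = QuotientGroup.mk x * QuotientGroup.mk y := rfl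

lemma Aq_rel1 {r s t : ℕ} (hrs : r < s) (hst : s < t) (htn : t < n) :
    Aq n π r s * Aq n π s t = Aq n π s t * Aq n π r t := by
  unfold Aq
  rw [← Aq_mul, ← Aq_mul, band2 hrs hst htn]

lemma Aq_rel2 {r s t : ℕ} (hrs : r < s) (hst : s < t) (htn : t < n) :
    Aq n π s t * Aq n π r t = Aq n π r t * Aq n π r s := by
  unfold Aq
  rw [← Aq_mul, ← Aq_mul, ← band2 hrs hst htn, band1 hrs hst htn]

lemma Aq_nested {k i j l : ℕ} (hki : k < i) (hij : i < j) (hjl : j < l) (hln : l < n) :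
    Commute (Aq n π k l) (Aq n π i j) := by
  unfold Aq
  unfold Commute SemiconjBy
  rw [← Aq_mul, ← Aq_mul, (halfTwist_nested hki hij hjl hln).eq]

lemma Aq_unlinked {i j k l : ℕ} (hij : i < j) (hjk : j < k) (hkl : k < l) :
    Commute (Aq n π i j) (Aq n π k l) := by
  unfold Aq
  unfold Commute SemiconjBy
  rw [← Aq_mul, ← Aq_mul, (commute_halfTwist_unlinked hij hjk hkl).eq]

open scoped commutatorElement

lemma kerp_comm {x y : BraidGroup n} (hx : π x = 1) (hy : π y = 1) :
    Commute (QuotientGroup.mk x : Gq n π) (QuotientGroup.mk y) := by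
  have hmem : ⁅x, y⁆ ∈ (⁅π.ker, π.ker⁆ : Subgroup (BraidGroup n)) :=
    Subgroup.commutator_mem_commutator (by simpa [MonoidHom.mem_ker] using hx)
      (by simpa [MonoidHom.mem_ker] using hy)
  have h1 : (QuotientGroup.mk ⁅x, y⁆ : Gq n π) = 1 := (QuotientGroup.eq_one_iff _).2 hmem
  have h2 : (QuotientGroup.mk ⁅x, y⁆ : Gq n π) =
      ⁅(QuotientGroup.mk x : Gq n π), (QuotientGroup.mk y : Gq n π)⁆ := rfl
  rw [h2] at h1
  exact commutatorElement_eq_one_iff_commute.1 h1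

lemma conj_inv_sq {G : Type*} [Group G] {x y z : G} (h : y = x * z * x⁻¹)
    (hc : Commute (x^2) (z^2)) : x * (y^2)⁻¹ * x⁻¹ = (z^2)⁻¹ := by
  subst h
  have e : (x*z*x⁻¹)^2 = x * z^2 * x⁻¹ := by rw [sq, sq]; group
  rw [e]
  have e2 : x * (x * z^2 * x⁻¹)⁻¹ * x⁻¹ = x^2 * (z^2)⁻¹ * (x^2)⁻¹ := by rw [sq, sq]; group
  rw [e2, hc.inv_right.eq]
  group

lemma conj_sq_exact {G : Type*} [Group G] {w y z : G} (h : w * y * w⁻¹ = z) :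
    w * y^2 * w⁻¹ = z^2 := by
  rw [← h]
  have e : (w*y*w⁻¹)^2 = w * y^2 * w⁻¹ := by rw [sq, sq]; group
  rw [e]

end Gsec

section Main

variable {n : ℕ} {π : BraidGroup n →* Equiv.Perm (Fin n)}
variable (hK : ∀ a b c d : ℕ, a < b → b < n → c < d → d < n →
  Commute ((Aq n π a b)^2) ((Aq n π c d)^2))

lemma Aq_rel3 {r s t : ℕ} (hrs : r < s) (hst : s < t) (htn : t < n) :
    Aq n π r s * Aq n π s t = Aq n π r t * Aq n π r s := by
  unfold Aq
  rw [← Aq_mul, ← Aq_mul, band1 hrs hst htn]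

section Ecases

variable {r s t : ℕ} (hrs : r < s) (hst : s < t) (htn : t < n)

include hrs hst htn

lemma caseE2 : Aq n π r s * Aq n π s t * (Aq n π r s)⁻¹ * (Aq n π r t)⁻¹ = 1 := by
  rw [Aq_rel3 hrs hst htn]; group

lemma caseE4 : Aq n π r t * Aq n π r s * (Aq n π r t)⁻¹ * (Aq n π s t)⁻¹ = 1 := by
  rw [← Aq_rel2 hrs hst htn]; group

lemma caseE5 : Aq n π s t * Aq n π r t * (Aq n π s t)⁻¹ * (Aq n π r s)⁻¹ = 1 := by
  rw [← Aq_rel1 hrs hst htn]; group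

include hK

lemma caseE1 : Aq n π r t * Aq n π s t * (Aq n π r t)⁻¹ * (Aq n π r s)⁻¹
    = (Aq n π r t)^2 * ((Aq n π s t)^2)⁻¹ := by
  have h1 : Aq n π s t = Aq n π r t * Aq n π r s * (Aq n π r t)⁻¹ := by
    rw [← Aq_rel2 hrs hst htn]; group
  have h2 : Aq n π r t = Aq n π r s * Aq n π s t * (Aq n π r s)⁻¹ := by
    rw [Aq_rel3 hrs hst htn]; group
  have hc : Commute ((Aq n π r s)^2) ((Aq n π s t)^2) := hK r s s t hrs (by omega) hst htn
  calc Aq n π r t * Aq n π s t * (Aq n π r t)⁻¹ * (Aq n π r s)⁻¹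
      = (Aq n π r t * Aq n π r t) * (Aq n π r s * ((Aq n π r t * Aq n π r t))⁻¹ * (Aq n π r s)⁻¹) := by
        rw [h1]; group
    _ = (Aq n π r t)^2 * (Aq n π r s * (((Aq n π r t)^2))⁻¹ * (Aq n π r s)⁻¹) := by rw [← sq]
    _ = (Aq n π r t)^2 * (((Aq n π s t)^2)⁻¹) := by rw [conj_inv_sq h2 hc]

lemma caseE3 : Aq n π r s * Aq n π r t * (Aq n π r s)⁻¹ * (Aq n π s t)⁻¹
    = (Aq n π r s)^2 * ((Aq n π r t)^2)⁻¹ := by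
  have h2 : Aq n π r t = Aq n π r s * Aq n π s t * (Aq n π r s)⁻¹ := by
    rw [Aq_rel3 hrs hst htn]; group
  have h3 : Aq n π r s = Aq n π s t * Aq n π r t * (Aq n π s t)⁻¹ := by
    rw [← Aq_rel1 hrs hst htn]; group
  have hc : Commute ((Aq n π s t)^2) ((Aq n π r t)^2) := hK s t r t hst htn (by omega) htn
  calc Aq n π r s * Aq n π r t * (Aq n π r s)⁻¹ * (Aq n π s t)⁻¹
      = (Aq n π r s * Aq n π r s) * (Aq n π s t * ((Aq n π r s * Aq n π r s))⁻¹ * (Aq n π s t)⁻¹) := by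
        rw [h2]; group
    _ = (Aq n π r s)^2 * (Aq n π s t * (((Aq n π r s)^2))⁻¹ * (Aq n π s t)⁻¹) := by rw [← sq]
    _ = (Aq n π r s)^2 * (((Aq n π r t)^2)⁻¹) := by rw [conj_inv_sq h3 hc]

lemma caseE6 : Aq n π s t * Aq n π r s * (Aq n π s t)⁻¹ * (Aq n π r t)⁻¹
    = (Aq n π s t)^2 * ((Aq n π r s)^2)⁻¹ := by
  have h1 : Aq n π s t = Aq n π r t * Aq n π r s * (Aq n π r t)⁻¹ := by
    rw [← Aq_rel2 hrs hst htn]; group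
  have h3 : Aq n π r s = Aq n π s t * Aq n π r t * (Aq n π s t)⁻¹ := by
    rw [← Aq_rel1 hrs hst htn]; group
  have hc : Commute ((Aq n π r t)^2) ((Aq n π r s)^2) := hK r t r s (by omega) htn hrs (by omega)
  calc Aq n π s t * Aq n π r s * (Aq n π s t)⁻¹ * (Aq n π r t)⁻¹
      = (Aq n π s t * Aq n π s t) * (Aq n π r t * ((Aq n π s t * Aq n π s t))⁻¹ * (Aq n π r t)⁻¹) := by
        rw [h3]; group
    _ = (Aq n π s t)^2 * (Aq n π r t * (((Aq n π s t)^2))⁻¹ * (Aq n π r t)⁻¹) := by rw [← sq]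
    _ = (Aq n π s t)^2 * (((Aq n π r s)^2)⁻¹) := by rw [conj_inv_sq h1 hc]

end Ecases

end Main

section AbstractD

variable {G : Type*} [Group G] (a1 a2 a3 a4 a5 a6 : G)

lemma caseD_abstract
    (r12 : a1 * a4 = a4 * a2) (r22 : a4 * a2 = a2 * a1)
    (r13 : a1 * a5 = a5 * a3) (r23 : a5 * a3 = a3 * a1)
    (r15 : a2 * a6 = a6 * a3) (r25 : a6 * a3 = a3 * a2)
    (r17 : a4 * a6 = a6 * a5) (r27 : a6 * a5 = a5 * a4)
    (cn : a3 * a4 = a4 * a3) (cu : a1 * a6 = a6 * a1)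
    (k13 : Commute (a1*a1) (a3*a3)) (k54 : Commute (a5*a5) (a4*a4))
    (k36 : Commute (a3*a3) (a6*a6)) (k46 : Commute (a4*a4) (a6*a6)) :
    a2 * a5 * a2⁻¹ * a5⁻¹ = (a1*a1) * (a3*a3)⁻¹ * (a4*a4)⁻¹ * (a6*a6) := by
  have s1 : a5 = a6⁻¹ * (a4 * a6) := by rw [r17]; group
  have hch6 : a2 * a6 = a3 * a2 := by rw [r15, r25]
  have s2 : a2 * a6⁻¹ = a3⁻¹ * a2 := by
    calc a2 * a6⁻¹ = a3⁻¹ * (a3 * a2) * a6⁻¹ := by group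
      _ = a3⁻¹ * (a2 * a6) * a6⁻¹ := by rw [hch6]
      _ = a3⁻¹ * a2 := by group
  have s2' : a6 * a2⁻¹ = a2⁻¹ * a3 := by
    calc a6 * a2⁻¹ = (a2 * a6⁻¹)⁻¹ := by group
      _ = (a3⁻¹ * a2)⁻¹ := by rw [s2]
      _ = a2⁻¹ * a3 := by group
  have h4 : a4 = a2 * a1 * a2⁻¹ := by rw [← r22]; group
  have hch1 : a1 * a4 = a2 * a1 := by rw [r12, r22]
  have h4b : a4 = a1⁻¹ * (a2 * a1) := by rw [← hch1]; group
  have hch2 : a1 * a5 = a3 * a1 := by rw [r13, r23]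
  have s5 : a3⁻¹ * a1 = a1 * a5⁻¹ := by
    calc a3⁻¹ * a1 = a3⁻¹ * ((a1 * a5) * a5⁻¹) := by group
      _ = a3⁻¹ * ((a3 * a1) * a5⁻¹) := by rw [hch2]
      _ = a1 * a5⁻¹ := by group
  have h6 : a2 = a3⁻¹ * (a6 * a3) := by rw [r25]; group
  have s6 : (a2*a2)⁻¹ * a3 = a3 * (a6*a6)⁻¹ := by
    rw [h6]
    calc ((a3⁻¹ * (a6 * a3)) * (a3⁻¹ * (a6 * a3)))⁻¹ * a3
        = a3⁻¹ * ((a6*a6)⁻¹ * (a3*a3)) := by group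
      _ = a3⁻¹ * ((a3*a3) * (a6*a6)⁻¹) := by rw [← k36.inv_right.eq]
      _ = a3 * (a6*a6)⁻¹ := by group
  have s7 : (a4*a4) * a3 = a3 * (a4*a4) := by
    calc (a4*a4) * a3 = a4 * (a4 * a3) := by group
      _ = a4 * (a3 * a4) := by rw [← cn]
      _ = (a4 * a3) * a4 := by group
      _ = (a3 * a4) * a4 := by rw [← cn]
      _ = a3 * (a4*a4) := by group
  have h8 : a3 = a5⁻¹ * (a1 * a5) := by rw [r13]; group
  have s8 : a5⁻¹ * a3 = (a5*a5)⁻¹ * a1 * a5 := by rw [h8]; group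
  have h9 : a5 * a4 * a5⁻¹ = a6 := by rw [← r27]; group
  have s9 : a5 * (a4*a4) * a5⁻¹ = a6*a6 := by rw [← h9]; group
  have s10 : a5 * (a6*a6)⁻¹ * a5⁻¹ = (a4*a4)⁻¹ := by
    rw [← h9]
    calc a5 * ((a5 * a4 * a5⁻¹)*(a5 * a4 * a5⁻¹))⁻¹ * a5⁻¹
        = (a5*a5) * (a4*a4)⁻¹ * (a5*a5)⁻¹ := by group
      _ = (a4*a4)⁻¹ * (a5*a5) * (a5*a5)⁻¹ := by rw [k54.inv_right.eq]
      _ = (a4*a4)⁻¹ := by group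
  have s11 : a5 * ((a4*a4) * ((a6*a6)⁻¹ * a5⁻¹)) = (a6*a6) * (a4*a4)⁻¹ := by
    calc a5 * ((a4*a4) * ((a6*a6)⁻¹ * a5⁻¹))
        = (a5 * (a4*a4) * a5⁻¹) * (a5 * (a6*a6)⁻¹ * a5⁻¹) := by group
      _ = (a6*a6) * (a4*a4)⁻¹ := by rw [s9, s10]
  have h12 : a5 = a1⁻¹ * (a3 * a1) := by rw [← hch2]; group
  have s12 : a1 * (a5*a5)⁻¹ * a1 = (a1*a1) * (a3*a3)⁻¹ := by
    rw [h12]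
    calc a1 * ((a1⁻¹ * (a3 * a1)) * (a1⁻¹ * (a3 * a1)))⁻¹ * a1
        = (a3*a3)⁻¹ * (a1*a1) := by group
      _ = (a1*a1) * (a3*a3)⁻¹ := by rw [← k13.inv_right.eq]
  calc a2 * a5 * a2⁻¹ * a5⁻¹
      = (a2 * a6⁻¹) * a4 * (a6 * a2⁻¹) * a5⁻¹ := by nth_rewrite 1 [s1]; group
    _ = (a3⁻¹ * a2) * a4 * (a2⁻¹ * a3) * a5⁻¹ := by rw [s2, s2']
    _ = a3⁻¹ * (a2 * (a2 * a1 * a2⁻¹) * a2⁻¹) * a3 * a5⁻¹ := by rw [← h4]; group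
    _ = a3⁻¹ * ((a2*a2) * a1) * (a2*a2)⁻¹ * a3 * a5⁻¹ := by group
    _ = a3⁻¹ * (a1 * (a4*a4)) * (a2*a2)⁻¹ * a3 * a5⁻¹ := by
        rw [show (a2*a2) * a1 = a1 * (a4*a4) by rw [h4b]; group]
    _ = (a3⁻¹ * a1) * (a4*a4) * ((a2*a2)⁻¹ * a3) * a5⁻¹ := by group
    _ = (a1 * a5⁻¹) * (a4*a4) * (a3 * (a6*a6)⁻¹) * a5⁻¹ := by rw [s5, s6]
    _ = a1 * a5⁻¹ * ((a4*a4) * a3) * ((a6*a6)⁻¹ * a5⁻¹) := by group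
    _ = a1 * (a5⁻¹ * a3) * ((a4*a4) * ((a6*a6)⁻¹ * a5⁻¹)) := by rw [s7]; group
    _ = a1 * ((a5*a5)⁻¹ * a1) * (a5 * ((a4*a4) * ((a6*a6)⁻¹ * a5⁻¹))) := by rw [s8]; group
    _ = a1 * (a5*a5)⁻¹ * a1 * ((a6*a6) * (a4*a4)⁻¹) := by rw [s11]; group
    _ = ((a1*a1) * (a3*a3)⁻¹) * ((a6*a6) * (a4*a4)⁻¹) := by rw [← mul_assoc, s12]; group
    _ = (a1*a1) * (a3*a3)⁻¹ * (a4*a4)⁻¹ * (a6*a6) := by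
        rw [show (a6*a6) * (a4*a4)⁻¹ = (a4*a4)⁻¹ * (a6*a6) by rw [← k46.inv_left.eq]]
        group

end AbstractD

lemma caseD {n : ℕ} {π : BraidGroup n →* Equiv.Perm (Fin n)}
    (hK : ∀ a b c d : ℕ, a < b → b < n → c < d → d < n →
      Commute ((Aq n π a b)^2) ((Aq n π c d)^2))
    {r s t u : ℕ} (hrs : r < s) (hst : s < t) (htu : t < u) (hun : u < n) :
    Aq n π r t * Aq n π s u * (Aq n π r t)⁻¹ * (Aq n π s u)⁻¹
      = (Aq n π r s)^2 * ((Aq n π r u)^2)⁻¹ * ((Aq n π s t)^2)⁻¹ * (Aq n π t u)^2 := by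
  have k13 : Commute (Aq n π r s * Aq n π r s) (Aq n π r u * Aq n π r u) := by
    have h := hK r s r u hrs (by omega) (by omega) hun
    rwa [sq, sq] at h
  have k54 : Commute (Aq n π s u * Aq n π s u) (Aq n π s t * Aq n π s t) := by
    have h := hK s u s t (by omega) hun hst (by omega)
    rwa [sq, sq] at h
  have k36 : Commute (Aq n π r u * Aq n π r u) (Aq n π t u * Aq n π t u) := by
    have h := hK r u t u (by omega) hun htu hun
    rwa [sq, sq] at h
  have k46 : Commute (Aq n π s t * Aq n π s t) (Aq n π t u * Aq n π t u) := by
    have h := hK s t t u hst (by omega) htu hun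
    rwa [sq, sq] at h
  have h := caseD_abstract (Aq n π r s) (Aq n π r t) (Aq n π r u) (Aq n π s t) (Aq n π s u)
    (Aq n π t u)
    (Aq_rel1 hrs hst (by omega)) (Aq_rel2 hrs hst (by omega))
    (Aq_rel1 hrs (by omega) hun) (Aq_rel2 hrs (by omega) hun)
    (Aq_rel1 (by omega) htu hun) (Aq_rel2 (by omega) htu hun)
    (Aq_rel1 hst htu hun) (Aq_rel2 hst htu hun)
    (Aq_nested hrs hst htu hun).eq (Aq_unlinked hrs hst htu).eq
    k13 k54 k36 k46
  rw [sq (Aq n π r s), sq (Aq n π r u), sq (Aq n π s t), sq (Aq n π t u)]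
  exact h


lemma reorder4 {G : Type*} [Group G] {p1 p2 p3 p4 : G}
    (c12 : Commute p1 p2) (c13 : Commute p1 p3) (c14 : Commute p1 p4)
    (c23 : Commute p2 p3) (c24 : Commute p2 p4) (c34 : Commute p3 p4) :
    (p1 * p2⁻¹ * p3⁻¹ * p4)⁻¹ = p1⁻¹ * p2 * p3 * p4⁻¹ := by
  have e1 : (p1 * p2⁻¹ * p3⁻¹ * p4)⁻¹ = p4⁻¹ * (p3 * (p2 * p1⁻¹)) := by group
  rw [e1]
  calc p4⁻¹ * (p3 * (p2 * p1⁻¹))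
      = p4⁻¹ * (p3 * (p1⁻¹ * p2)) := by rw [← c12.inv_left.eq]
    _ = p4⁻¹ * ((p3 * p1⁻¹) * p2) := by group
    _ = p4⁻¹ * ((p1⁻¹ * p3) * p2) := by rw [c13.inv_left.eq]
    _ = (p4⁻¹ * p1⁻¹) * p3 * p2 := by group
    _ = (p1⁻¹ * p4⁻¹) * p3 * p2 := by rw [← (c14.inv_left.inv_right).eq]
    _ = p1⁻¹ * (p4⁻¹ * p3) * p2 := by group
    _ = p1⁻¹ * (p3 * p4⁻¹) * p2 := by rw [← c34.inv_right.eq]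
    _ = p1⁻¹ * p3 * (p4⁻¹ * p2) := by group
    _ = p1⁻¹ * p3 * (p2 * p4⁻¹) := by rw [← c24.inv_right.eq]
    _ = p1⁻¹ * (p3 * p2) * p4⁻¹ := by group
    _ = p1⁻¹ * (p2 * p3) * p4⁻¹ := by rw [← c23.eq]
    _ = p1⁻¹ * p2 * p3 * p4⁻¹ := by group


lemma swap_triple {α : Type*} [DecidableEq α] {i j k : α} (hik : i ≠ k) (hij : i ≠ j) (hkj : k ≠ j) :
    Equiv.swap i j * Equiv.swap j k = Equiv.swap i k * Equiv.swap i j := by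
  ext x
  simp only [Equiv.Perm.mul_apply, Equiv.swap_apply_def]
  split_ifs <;> simp_all

lemma swap_disj_comm {α : Type*} [DecidableEq α] {i j k l : α} (h1 : i ≠ k) (h2 : i ≠ l)
    (h3 : j ≠ k) (h4 : j ≠ l) :
    Equiv.swap i j * Equiv.swap k l = Equiv.swap k l * Equiv.swap i j := by
  ext x
  simp only [Equiv.Perm.mul_apply, Equiv.swap_apply_def]
  split_ifs <;> simp_all

/-- The 2-cocycle `φ` classifying the extension
`0 → ℤ^(n choose 2) → G_n → S_n → 1` (computed, via the truncated resolution coming from the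
presentation complex of `S_n`, from the normalized normal-form section `s` lifting `σ_{i,j}`
to `σ̃_{i,j}`) is given on the 2-chain generators by: `φ(c̃_{i,j}) = g_{i,j}`;
`φ(d̃_{i,j,k,ℓ}) = g_{i,k} - g_{i,ℓ} - g_{k,j} + g_{j,ℓ}` if `i<k<j<ℓ`,
`= -g_{k,i} + g_{k,j} + g_{i,ℓ} - g_{ℓ,j}` if `k<i<ℓ<j`, and `0` otherwise;
`φ(ẽ_{i,k,j}) = g_{i,j} - g_{k,j}` if `i<k<j`, `j<i<k`, or `k<j<i`, and `0` otherwise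
(written multiplicatively in the abelian kernel of `G_n`). -/
theorem statement11 (n : ℕ) (π : BraidGroup n →* Equiv.Perm (Fin n))
    (hgen : IsBraidProj n π) (hsurj : Function.Surjective π)
    (p : Gq n π →* Equiv.Perm (Fin n))
    (hp : ∀ x : BraidGroup n, p (QuotientGroup.mk x) = π x)
    (s : Equiv.Perm (Fin n) → Gq n π)
    (hsec : ∀ g, p (s g) = g) (hone : s 1 = 1)
    -- the section lifts each transposition to the corresponding half twist
    (hs : ∀ i j : Fin n, i < j → s (Equiv.swap i j) = ht n π i j)
    -- normal form for products of disjoint transpositions (Lemma 4.8)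
    (hd : ∀ i j k l : Fin n, i < j → k < l →
      ({i, j} : Finset (Fin n)) ∩ {k, l} = ∅ →
      s (Equiv.swap i j * Equiv.swap k l) =
        if j < l then ht n π i j * ht n π k l else ht n π k l * ht n π i j)
    -- normal form for products of overlapping transpositions (Lemma 4.9)
    (he : ∀ i k j : Fin n, i ≠ k → i ≠ j → k ≠ j →
      s (Equiv.swap i j * Equiv.swap j k) =
        if k < j ∧ i < j then ht n π i k * ht n π i j
        else if i < k ∧ j < k then ht n π i j * ht n π j k
        else ht n π k j * ht n π k i) :
    -- value on c̃_{i,j}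
    (∀ i j : Fin n, i < j → s (Equiv.swap i j) * s (Equiv.swap i j) = ft n π i j) ∧
    -- value on d̃_{i,j,k,ℓ}
    (∀ i j k l : Fin n, i < j → k < l →
      ({i, j} : Finset (Fin n)) ∩ {k, l} = ∅ →
      (s (Equiv.swap i j) * s (Equiv.swap k l) *
          (s (Equiv.swap i j * Equiv.swap k l))⁻¹) *
        (s (Equiv.swap k l) * s (Equiv.swap i j) *
          (s (Equiv.swap k l * Equiv.swap i j))⁻¹)⁻¹ =
        if i < k ∧ k < j ∧ j < l then
          ft n π i k * (ft n π i l)⁻¹ * (ft n π k j)⁻¹ * ft n π j l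
        else if k < i ∧ i < l ∧ l < j then
          (ft n π k i)⁻¹ * ft n π k j * ft n π i l * (ft n π l j)⁻¹
        else 1) ∧
    -- value on ẽ_{i,k,j}
    (∀ i k j : Fin n, i ≠ k → i ≠ j → k ≠ j →
      (s (Equiv.swap i j) * s (Equiv.swap j k) *
          (s (Equiv.swap i j * Equiv.swap j k))⁻¹) *
        (s (Equiv.swap i k) * s (Equiv.swap i j) *
          (s (Equiv.swap i k * Equiv.swap i j))⁻¹)⁻¹ =
        if (i < k ∧ k < j) ∨ (j < i ∧ i < k) ∨ (k < j ∧ j < i) then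
          ft n π i j * (ft n π k j)⁻¹
        else 1) := by
  have hπ : ∀ a b : ℕ, ∀ (ha : a < n) (hb : b < n), a < b →
      π (halfTwist n a b) = Equiv.swap ⟨a, ha⟩ ⟨b, hb⟩ := by
    intro a b ha hb hab
    have h1 := hs ⟨a, ha⟩ ⟨b, hb⟩ (by simpa [Fin.lt_def] using hab)
    have h2 := hsec (Equiv.swap ⟨a, ha⟩ ⟨b, hb⟩)
    rw [h1] at h2
    unfold ht at h2
    rw [hp] at h2
    rw [show bb n (↑(⟨a, ha⟩ : Fin n)) (↑(⟨b, hb⟩ : Fin n)) = halfTwist n a b by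
      simp only [Fin.val_mk]; exact bb_eq_halfTwist hab] at h2
    exact h2
  have hπ2 : ∀ a b : ℕ, a < b → b < n → π (halfTwist n a b ^ 2) = 1 := by
    intro a b hab hb
    rw [map_pow, hπ a b (by omega) hb hab, sq, Equiv.swap_mul_self]
  have hK : ∀ a b c d : ℕ, a < b → b < n → c < d → d < n →
      Commute ((Aq n π a b)^2) ((Aq n π c d)^2) := by
    intro a b c d h1 h2 h3 h4
    have e1 : (Aq n π a b)^2 = QuotientGroup.mk (halfTwist n a b ^ 2) := by
      unfold Aq; rw [sq, sq]; rfl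
    have e2 : (Aq n π c d)^2 = QuotientGroup.mk (halfTwist n c d ^ 2) := by
      unfold Aq; rw [sq, sq]; rfl
    rw [e1, e2]
    exact kerp_comm (hπ2 a b h1 h2) (hπ2 c d h3 h4)
  have hsu : ∀ a b : Fin n, a ≠ b → s (Equiv.swap a b) = ht n π a b := by
    intro a b hab
    rcases lt_or_gt_of_ne hab with h | h
    · exact hs a b h
    · rw [Equiv.swap_comm, hs b a h, ht_symm]
  refine ⟨?_, ?_, ?_⟩
  · intro i j hij
    rw [hs i j hij]
    unfold ht ft
    rw [sq]
    rfl
  · intro i j k l hij hkl hdisj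
    have hik : i ≠ k := by
      intro h; subst h
      have hm : i ∈ ({i, j} : Finset (Fin n)) ∩ {i, l} := by simp
      rw [hdisj] at hm; exact absurd hm (Finset.notMem_empty _)
    have hil : i ≠ l := by
      intro h; subst h
      have hm : i ∈ ({i, j} : Finset (Fin n)) ∩ {k, i} := by simp
      rw [hdisj] at hm; exact absurd hm (Finset.notMem_empty _)
    have hjk : j ≠ k := by
      intro h; subst h
      have hm : j ∈ ({i, j} : Finset (Fin n)) ∩ {j, l} := by simp
      rw [hdisj] at hm; exact absurd hm (Finset.notMem_empty _)
    have hjl : j ≠ l := by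
      intro h; subst h
      have hm : j ∈ ({i, j} : Finset (Fin n)) ∩ {k, j} := by simp
      rw [hdisj] at hm; exact absurd hm (Finset.notMem_empty _)
    rw [← swap_disj_comm hik hil hjk hjl]
    rw [hsu i j (Fin.ne_of_lt hij), hsu k l (Fin.ne_of_lt hkl)]
    have key2 : ∀ (u v X : Gq n π), (u * v * X⁻¹) * (v * u * X⁻¹)⁻¹ = u * v * u⁻¹ * v⁻¹ := by
      intros; group
    rw [key2]
    have hij' : (i:ℕ) < ↑j := Fin.lt_def.1 hij
    have hkl' : (k:ℕ) < ↑l := Fin.lt_def.1 hkl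
    have hikn : (i:ℕ) ≠ ↑k := fun h => hik (Fin.val_injective h)
    have hiln : (i:ℕ) ≠ ↑l := fun h => hil (Fin.val_injective h)
    have hjkn : (j:ℕ) ≠ ↑k := fun h => hjk (Fin.val_injective h)
    have hjln : (j:ℕ) ≠ ↑l := fun h => hjl (Fin.val_injective h)
    have hjn : (j : ℕ) < n := j.2
    have hln : (l : ℕ) < n := l.2
    rcases Nat.lt_trichotomy (i:ℕ) ↑k with hac | hac | hac
    · rcases Nat.lt_trichotomy (j:ℕ) ↑k with hbc | hbc | hbc
      · -- i < j < k < l : unlinked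
        rw [if_neg (by rintro ⟨c1, c2, c3⟩; have := Fin.lt_def.1 c2; omega),
          if_neg (by rintro ⟨c1, c2, c3⟩; have := Fin.lt_def.1 c1; omega)]
        rw [ht_eq_Aq hij', ht_eq_Aq hkl']
        rw [(Aq_unlinked hij' hbc hkl').eq]; group
      · exact absurd hbc hjkn
      · rcases Nat.lt_trichotomy (j:ℕ) ↑l with hbd | hbd | hbd
        · -- i < k < j < l : linked
          rw [if_pos ⟨Fin.lt_def.2 hac, Fin.lt_def.2 hbc, Fin.lt_def.2 hbd⟩]
          rw [ht_eq_Aq hij', ht_eq_Aq hkl',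
            ft_eq_Aq_sq hac, ft_eq_Aq_sq (show (i:ℕ) < ↑l by omega),
            ft_eq_Aq_sq hbc, ft_eq_Aq_sq hbd]
          exact caseD hK hac hbc hbd hln
        · exact absurd hbd hjln
        · -- i < k < l < j : nested
          rw [if_neg (by rintro ⟨c1, c2, c3⟩; have := Fin.lt_def.1 c3; omega),
            if_neg (by rintro ⟨c1, c2, c3⟩; have := Fin.lt_def.1 c1; omega)]
          rw [ht_eq_Aq hij', ht_eq_Aq hkl']
          rw [(Aq_nested hac hkl' hbd hjn).eq]; group
    · exact absurd hac hikn
    · rcases Nat.lt_trichotomy (l:ℕ) ↑i with hda | hda | hda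
      · -- k < l < i < j : unlinked
        rw [if_neg (by rintro ⟨c1, c2, c3⟩; have := Fin.lt_def.1 c1; omega),
          if_neg (by rintro ⟨c1, c2, c3⟩; have := Fin.lt_def.1 c2; omega)]
        rw [ht_eq_Aq hij', ht_eq_Aq hkl']
        rw [(Aq_unlinked hkl' hda hij').symm.eq]; group
      · exact absurd hda.symm hiln
      · rcases Nat.lt_trichotomy (l:ℕ) ↑j with hdb | hdb | hdb
        · -- k < i < l < j : linked (reversed)
          rw [if_neg (by rintro ⟨c1, c2, c3⟩; have := Fin.lt_def.1 c1; omega),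
            if_pos ⟨Fin.lt_def.2 hac, Fin.lt_def.2 hda, Fin.lt_def.2 hdb⟩]
          rw [ht_eq_Aq hij', ht_eq_Aq hkl',
            ft_eq_Aq_sq hac, ft_eq_Aq_sq (show (k:ℕ) < ↑j by omega),
            ft_eq_Aq_sq hda, ft_eq_Aq_sq hdb]
          have e := caseD hK hac hda hdb hjn
          calc Aq n π ↑i ↑j * Aq n π ↑k ↑l * (Aq n π ↑i ↑j)⁻¹ * (Aq n π ↑k ↑l)⁻¹
              = (Aq n π ↑k ↑l * Aq n π ↑i ↑j * (Aq n π ↑k ↑l)⁻¹ * (Aq n π ↑i ↑j)⁻¹)⁻¹ := by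
                group
            _ = ((Aq n π ↑k ↑i)^2 * ((Aq n π ↑k ↑j)^2)⁻¹ * ((Aq n π ↑i ↑l)^2)⁻¹ *
                (Aq n π ↑l ↑j)^2)⁻¹ := by rw [e]
            _ = ((Aq n π ↑k ↑i)^2)⁻¹ * (Aq n π ↑k ↑j)^2 * (Aq n π ↑i ↑l)^2 *
                ((Aq n π ↑l ↑j)^2)⁻¹ := by
                exact reorder4 (hK _ _ _ _ hac i.2 (by omega) hjn)
                  (hK _ _ _ _ hac i.2 hda hln) (hK _ _ _ _ hac i.2 hdb hjn)
                  (hK _ _ _ _ (by omega) hjn hda hln) (hK _ _ _ _ (by omega) hjn hdb hjn)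
                  (hK _ _ _ _ hda hln hdb hjn)
        · exact absurd hdb.symm hjln
        · -- k < i < j < l : nested
          rw [if_neg (by rintro ⟨c1, c2, c3⟩; have := Fin.lt_def.1 c1; omega),
            if_neg (by rintro ⟨c1, c2, c3⟩; have := Fin.lt_def.1 c3; omega)]
          rw [ht_eq_Aq hij', ht_eq_Aq hkl']
          rw [(Aq_nested hac hij' hdb hln).symm.eq]; group
  · intro i k j hik hij hkj
    have hpe : Equiv.swap i j * Equiv.swap j k = Equiv.swap i k * Equiv.swap i j :=
      swap_triple hik hij hkj
    rw [← hpe]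
    rw [hsu i j hij, hsu j k (Ne.symm hkj), hsu i k hik]
    have key : ∀ (u v w X : Gq n π), (u * v * X⁻¹) * (w * u * X⁻¹)⁻¹ = u * v * u⁻¹ * w⁻¹ := by
      intros; group
    rw [key]
    have hik' : (i : ℕ) ≠ ↑k := fun h => hik (Fin.val_injective h)
    have hij' : (i : ℕ) ≠ ↑j := fun h => hij (Fin.val_injective h)
    have hkj' : (k : ℕ) ≠ ↑j := fun h => hkj (Fin.val_injective h)
    have hjn : (j : ℕ) < n := j.2
    have hin : (i : ℕ) < n := i.2
    have hkn : (k : ℕ) < n := k.2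
    rcases Nat.lt_trichotomy (i : ℕ) ↑k with hic | hic | hic
    · rcases Nat.lt_trichotomy (k : ℕ) ↑j with hcb | hcb | hcb
      · -- i < k < j : E1
        rw [if_pos (Or.inl ⟨Fin.lt_def.2 hic, Fin.lt_def.2 hcb⟩)]
        rw [ht_eq_Aq (show (i:ℕ) < ↑j by omega), ht_symm (↑j) (↑k),
          ht_eq_Aq (show (k:ℕ) < ↑j from hcb), ht_eq_Aq (show (i:ℕ) < ↑k from hic),
          ft_eq_Aq_sq (show (i:ℕ) < ↑j by omega), ft_eq_Aq_sq (show (k:ℕ) < ↑j from hcb)]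
        exact caseE1 hK hic hcb hjn
      · exact absurd hcb hkj'
      · rcases Nat.lt_trichotomy (i : ℕ) ↑j with hab | hab | hab
        · -- i < j < k : E2
          rw [if_neg (by
            push_neg
            refine ⟨fun _ => ?_, fun h => absurd (Fin.lt_def.1 h) (by omega), fun h => absurd (Fin.lt_def.1 h) (by omega)⟩
            · exact le_of_lt (Fin.lt_def.2 hcb) )]
          rw [ht_eq_Aq (show (i:ℕ) < ↑j from hab), ht_eq_Aq (show (j:ℕ) < ↑k from hcb),
            ht_eq_Aq (show (i:ℕ) < ↑k from hic)]
          exact caseE2 hab hcb hkn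
        · exact absurd hab hij'
        · -- j < i < k : E3
          rw [if_pos (Or.inr (Or.inl ⟨Fin.lt_def.2 hab, Fin.lt_def.2 hic⟩))]
          rw [ht_symm (↑i) (↑j), ht_eq_Aq (show (j:ℕ) < ↑i from hab),
            ht_eq_Aq (show (j:ℕ) < ↑k by omega), ht_eq_Aq (show (i:ℕ) < ↑k from hic),
            ft_symm (↑i) (↑j), ft_eq_Aq_sq (show (j:ℕ) < ↑i from hab),
            ft_symm (↑k) (↑j), ft_eq_Aq_sq (show (j:ℕ) < ↑k by omega)]
          exact caseE3 hK hab hic hkn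
    · exact absurd hic hik'
    · rcases Nat.lt_trichotomy (k : ℕ) ↑j with hcb | hcb | hcb
      · rcases Nat.lt_trichotomy (i : ℕ) ↑j with hab | hab | hab
        · -- k < i < j : E5
          rw [if_neg (by
            push_neg
            refine ⟨fun h => absurd (Fin.lt_def.1 h) (by omega),
              fun h => absurd (Fin.lt_def.1 h) (by omega), fun _ => ?_⟩
            · exact le_of_lt (Fin.lt_def.2 hab))]
          rw [ht_eq_Aq (show (i:ℕ) < ↑j from hab), ht_symm (↑j) (↑k),
            ht_eq_Aq (show (k:ℕ) < ↑j from hcb), ht_symm (↑i) (↑k),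
            ht_eq_Aq (show (k:ℕ) < ↑i by omega)]
          exact caseE5 (show (k:ℕ) < ↑i by omega) hab hjn
        · exact absurd hab hij'
        · -- k < j < i : E6
          rw [if_pos (Or.inr (Or.inr ⟨Fin.lt_def.2 hcb, Fin.lt_def.2 hab⟩))]
          rw [ht_symm (↑i) (↑j), ht_eq_Aq (show (j:ℕ) < ↑i from hab),
            ht_symm (↑j) (↑k), ht_eq_Aq (show (k:ℕ) < ↑j from hcb),
            ht_symm (↑i) (↑k), ht_eq_Aq (show (k:ℕ) < ↑i by omega),
            ft_symm (↑i) (↑j), ft_eq_Aq_sq (show (j:ℕ) < ↑i from hab),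
            ft_eq_Aq_sq (show (k:ℕ) < ↑j from hcb)]
          exact caseE6 hK hcb hab hin
      · exact absurd hcb hkj'
      · -- j < k < i : E4
        rw [if_neg (by
          push_neg
          refine ⟨fun h => absurd (Fin.lt_def.1 h) (by omega), fun _ => ?_,
            fun h => absurd (Fin.lt_def.1 h) (by omega)⟩
          · exact le_of_lt (Fin.lt_def.2 hic))]
        rw [ht_symm (↑i) (↑j), ht_eq_Aq (show (j:ℕ) < ↑i by omega),
          ht_eq_Aq (show (j:ℕ) < ↑k from hcb),
          ht_symm (↑i) (↑k), ht_eq_Aq (show (k:ℕ) < ↑i from hic)]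
        exact caseE4 hcb hic hin
end

section
/- The cohomology class [φ] ∈ H²(S_n; ℤ^(n choose 2)) classifying the extension 0 → ℤ^(n choose 2) → G_n → S_n → 1 (where G_n = B_n/[PB_n,PB_n]) has order exactly 2: 2[φ] = 0 but [φ] ≠ 0. -/
/-- Index type for pairs `i < j`. -/
def PairIdx (n : ℕ) := {p : Fin n × Fin n // p.1 < p.2}

/-- The generator `σ̃_{i,j}` as a letter. -/
def sF {n : ℕ} (p : PairIdx n) : FreeGroup (PairIdx n ⊕ PairIdx n) := FreeGroup.of (Sum.inl p)

/-- The generator `g_{i,j}` as a letter. -/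
def gF {n : ℕ} (p : PairIdx n) : FreeGroup (PairIdx n ⊕ PairIdx n) := FreeGroup.of (Sum.inr p)

/-- `σ̃_{i,j}` with the unordered convention (junk value `1` if `i = j`). -/
def sU {n : ℕ} (i j : Fin n) : FreeGroup (PairIdx n ⊕ PairIdx n) :=
  if h : i < j then sF ⟨(i, j), h⟩ else if h' : j < i then sF ⟨(j, i), h'⟩ else 1

/-- `g_{i,j}` with the unordered convention (junk value `1` if `i = j`). -/
def gU {n : ℕ} (i j : Fin n) : FreeGroup (PairIdx n ⊕ PairIdx n) :=
  if h : i < j then gF ⟨(i, j), h⟩ else if h' : j < i then gF ⟨(j, i), h'⟩ else 1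

/-- The relations of `G_n^t` (Table 2): all `g`'s commute; `σ̃_{i,j}² = g_{i,j}^t`;
the conjugation relations `R^t3`, `R^t4` among half twists; the commutator relations `R^t5`
valued in powers of the `g`'s; and `σ̃_{i,j} g_{k,ℓ} σ̃_{i,j}⁻¹ = g_{σ_{i,j}(k),σ_{i,j}(ℓ)}`. -/
def reltT (n : ℕ) (t : ℤ) : Set (FreeGroup (PairIdx n ⊕ PairIdx n)) :=
  {r | ∃ p q : PairIdx n, r = gF p * gF q * (gF p)⁻¹ * (gF q)⁻¹} ∪
  {r | ∃ p : PairIdx n, r = sF p ^ 2 * (gF p ^ t)⁻¹} ∪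
  {r | ∃ i j k : Fin n, ((k < i ∧ i < j) ∨ (i < j ∧ j < k) ∨ (j < k ∧ k < i)) ∧
      r = sU i j * sU k j * (sU i j)⁻¹ * (sU i k)⁻¹} ∪
  {r | ∃ i j k : Fin n, ((i < k ∧ k < j) ∨ (j < i ∧ i < k) ∨ (k < j ∧ j < i)) ∧
      r = (sU i j)⁻¹ * sU j k * sU i j * (sU i k)⁻¹} ∪
  {r | ∃ i j k l : Fin n, i < j ∧ k < l ∧
      r = sU i j * sU k l * (sU i j)⁻¹ * (sU k l)⁻¹ *
        (if i < k ∧ k < j ∧ j < l then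
            gU i k ^ t * gU i l ^ (-t) * gU j k ^ (-t) * gU j l ^ t
          else if k < i ∧ i < l ∧ l < j then
            gU k i ^ (-t) * gU k j ^ t * gU i l ^ t * gU l j ^ (-t)
          else 1)⁻¹} ∪
  {r | ∃ i j k l : Fin n, i ≠ j ∧ k ≠ l ∧
      r = sU i j * gU k l * (sU i j)⁻¹ *
        (gU (Equiv.swap i j k) (Equiv.swap i j l))⁻¹}

/-- The group `G_n^t` of Table 2. -/
abbrev GT (n : ℕ) (t : ℤ) := PresentedGroup (reltT n t)

noncomputable def expSum (n : ℕ) : BraidGroup n →* Multiplicative ℤ :=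
  PresentedGroup.toGroup (f := fun _ => Multiplicative.ofAdd (1:ℤ)) (by
    rintro r ⟨i, j, ⟨h, rfl⟩ | ⟨h, rfl⟩⟩ <;>
      simp only [map_mul, map_inv, FreeGroup.lift_apply_of] <;> group)

@[simp] lemma expSum_of (n : ℕ) (i : Fin (n-1)) :
    expSum n (PresentedGroup.of i) = Multiplicative.ofAdd 1 :=
  PresentedGroup.toGroup.of _

noncomputable def sgnB (n : ℕ) : BraidGroup n →* ℤˣ :=
  (zpowersHom ℤˣ (-1)).comp (expSum n)


noncomputable def expSumQ (n : ℕ) (π : BraidGroup n →* Equiv.Perm (Fin n)) :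
    Gq n π →* Multiplicative ℤ :=
  QuotientGroup.lift _ (expSum n) (by
    intro x hx
    have : (⁅π.ker, π.ker⁆ : Subgroup (BraidGroup n)) ≤ (expSum n).ker := by
      rw [Subgroup.commutator_le]
      intro g₁ _ g₂ _
      rw [MonoidHom.mem_ker, map_commutatorElement,
        commutatorElement_eq_one_iff_commute]
      exact mul_comm _ _
    exact this hx)

@[simp] lemma expSumQ_mk (n : ℕ) (π : BraidGroup n →* Equiv.Perm (Fin n))
    (x : BraidGroup n) : expSumQ n π (QuotientGroup.mk x) = expSum n x := rfl


def coxRels (m : ℕ) : Set (FreeGroup (Fin m)) :=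
  {r | ∃ i j : Fin m,
    ((i : ℕ) + 1 = (j : ℕ) ∧
      r = FreeGroup.of i * FreeGroup.of j * FreeGroup.of i *
        (FreeGroup.of j * FreeGroup.of i * FreeGroup.of j)⁻¹) ∨
    ((i : ℕ) + 1 < (j : ℕ) ∧
      r = FreeGroup.of i * FreeGroup.of j * (FreeGroup.of j * FreeGroup.of i)⁻¹)} ∪
  {r | ∃ i : Fin m, r = FreeGroup.of i * FreeGroup.of i}

abbrev Cx (m : ℕ) := PresentedGroup (coxRels m)

def cg {m : ℕ} (i : Fin m) : Cx m := PresentedGroup.of i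

lemma cox_rel_one {m : ℕ} {r : FreeGroup (Fin m)} (h : r ∈ coxRels m) :
    PresentedGroup.mk (coxRels m) r = 1 :=
  (QuotientGroup.eq_one_iff _).mpr (Subgroup.subset_normalClosure h)

lemma cg_sq {m : ℕ} (i : Fin m) : cg i * cg i = 1 := by
  have := cox_rel_one (Set.mem_union_right _ ⟨i, rfl⟩)
  simp only [map_mul] at this
  exact this

lemma cg_inv {m : ℕ} (i : Fin m) : (cg i)⁻¹ = cg i :=
  inv_eq_of_mul_eq_one_right (cg_sq i)

lemma cg_braid {m : ℕ} {i j : Fin m} (h : (i : ℕ) + 1 = (j : ℕ)) :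
    cg i * cg j * cg i = cg j * cg i * cg j := by
  have := cox_rel_one (Set.mem_union_left _ ⟨i, j, Or.inl ⟨h, rfl⟩⟩)
  simp only [map_mul, map_inv] at this
  rw [mul_inv_eq_one] at this
  exact this

lemma cg_comm {m : ℕ} {i j : Fin m} (h : (i : ℕ) + 1 < (j : ℕ)) :
    Commute (cg i) (cg j) := by
  have := cox_rel_one (Set.mem_union_left _ ⟨i, j, Or.inr ⟨h, rfl⟩⟩)
  simp only [map_mul, map_inv] at this
  rw [mul_inv_eq_one] at this
  exact this

noncomputable def cgN (m t : ℕ) : Cx m := if h : t < m then cg ⟨t, h⟩ else 1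

lemma cgN_sq (m t : ℕ) : cgN m t * cgN m t = 1 := by
  unfold cgN; split <;> simp [cg_sq]

lemma cgN_inv (m t : ℕ) : (cgN m t)⁻¹ = cgN m t :=
  inv_eq_of_mul_eq_one_right (cgN_sq m t)

lemma cgN_braid {m t : ℕ} (h : t + 1 < m) :
    cgN m t * cgN m (t+1) * cgN m t = cgN m (t+1) * cgN m t * cgN m (t+1) := by
  unfold cgN
  rw [dif_pos (by omega : t < m), dif_pos h]
  exact cg_braid rfl

lemma cgN_comm {m t u : ℕ} (h : t + 1 < u) : Commute (cgN m t) (cgN m u) := by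
  unfold cgN
  split
  · split
    · exact cg_comm h
    · exact Commute.one_right _
  · exact Commute.one_left _

noncomputable def cseg (m a b : ℕ) : Cx m := (((List.range' a (b - a)).reverse).map (cgN m)).prod

lemma cseg_of_le {m a b : ℕ} (h : b ≤ a) : cseg m a b = 1 := by
  simp [cseg, Nat.sub_eq_zero_of_le h]

lemma cseg_low {m a b : ℕ} (h : a < b) : cseg m a b = cseg m (a+1) b * cgN m a := by
  unfold cseg
  rw [show b - a = (b - (a+1)) + 1 by omega, List.range'_succ, List.reverse_cons,
    List.map_append, List.prod_append]
  simp

lemma cseg_high {m a b : ℕ} (h : a ≤ b) : cseg m a (b+1) = cgN m b * cseg m a b := by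
  unfold cseg
  rw [show b + 1 - a = (b - a) + 1 by omega, List.range'_1_concat, List.reverse_append,
    show a + (b - a) = b by omega]
  simp

lemma cseg_split {m : ℕ} {a c : ℕ} (hac : a ≤ c) :
    ∀ {b : ℕ}, c ≤ b → cseg m a b = cseg m c b * cseg m a c := by
  induction c, hac using Nat.le_induction with
  | base => intro b _; rw [cseg_of_le le_rfl, mul_one]
  | succ c hc ih =>
    intro b hb
    rw [ih (by omega), cseg_high hc, cseg_low (show c < b by omega), mul_assoc]

lemma commute_cseg {m : ℕ} (x : Cx m) {a b : ℕ}
    (h : ∀ t, a ≤ t → t < b → Commute x (cgN m t)) : Commute x (cseg m a b) := by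
  apply Commute.list_prod_right
  intro y hy
  simp only [List.mem_map, List.mem_reverse, List.mem_range'_1] at hy
  obtain ⟨t, ⟨ht1, ht2⟩, rfl⟩ := hy
  exact h t ht1 (by omega)

lemma csegE1 {m k : ℕ} (h : k < m) :
    cseg m k m * cgN m k = cseg m (k+1) m := by
  rw [cseg_low h, mul_assoc, cgN_sq, mul_one]

lemma csegE2 {m k : ℕ} (h : k < m) :
    cseg m (k+1) m * cgN m k = cseg m k m := (cseg_low h).symm

lemma csegE3 {m i k : ℕ} (h : i + 1 < k) :
    Commute (cgN m i) (cseg m k m) :=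
  commute_cseg _ (fun t ht _ => cgN_comm (by omega))

lemma csegE4 {m k i : ℕ} (hk : k < i) (hi : i < m) :
    cseg m k m * cgN m i = cgN m (i-1) * cseg m k m := by
  obtain ⟨j, rfl⟩ : ∃ j, i = j + 1 := ⟨i - 1, by omega⟩
  simp only [Nat.add_sub_cancel]
  have hsplit : cseg m k m = cseg m (j+2) m * (cgN m (j+1) * (cgN m j * cseg m k j)) := by
    rw [cseg_split (show k ≤ j+2 by omega) (show j + 2 ≤ m by omega),
      cseg_high (show k ≤ j+1 by omega), cseg_high (show k ≤ j by omega)]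
  have hc1 : Commute (cgN m (j+1)) (cseg m k j) :=
    commute_cseg _ (fun t ht htj => (cgN_comm (by omega)).symm)
  have hc2 : Commute (cgN m j) (cseg m (j+2) m) := csegE3 (by omega)
  calc cseg m k m * cgN m (j+1)
      = cseg m (j+2) m * (cgN m (j+1) * (cgN m j * (cseg m k j * cgN m (j+1)))) := by
        rw [hsplit]; group
    _ = cseg m (j+2) m * (cgN m (j+1) * (cgN m j * (cgN m (j+1) * cseg m k j))) := by
        rw [hc1.eq]
    _ = cseg m (j+2) m * (cgN m (j+1) * cgN m j * cgN m (j+1)) * cseg m k j := by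
        group
    _ = cseg m (j+2) m * (cgN m j * cgN m (j+1) * cgN m j) * cseg m k j := by
        rw [← cgN_braid (show j + 1 < m by omega)]
    _ = cseg m (j+2) m * cgN m j * (cgN m (j+1) * (cgN m j * cseg m k j)) := by group
    _ = cgN m j * cseg m (j+2) m * (cgN m (j+1) * (cgN m j * cseg m k j)) := by
        rw [hc2.symm.eq]
    _ = cgN m j * cseg m k m := by rw [hsplit]; group

noncomputable def cxIncl (m : ℕ) : Cx m →* Cx (m+1) :=
  PresentedGroup.toGroup (f := fun i => cg (Fin.castSucc i)) (by
    rintro r (⟨i, j, ⟨hij, rfl⟩ | ⟨hij, rfl⟩⟩ | ⟨i, rfl⟩) <;>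
      simp only [map_mul, map_inv, FreeGroup.lift_apply_of]
    · rw [mul_inv_eq_one]
      exact cg_braid (by simpa using hij)
    · rw [mul_inv_eq_one]
      exact (cg_comm (by simpa using hij)).eq
    · exact cg_sq _)

lemma cgN_mem_range {m : ℕ} {t : ℕ} (h : t < m) : cgN (m+1) t ∈ (cxIncl m).range := by
  refine ⟨cg ⟨t, h⟩, ?_⟩
  show PresentedGroup.toGroup _ (PresentedGroup.of _) = _
  rw [PresentedGroup.toGroup.of]
  unfold cgN
  rw [dif_pos (by omega : t < m + 1)]
  rfl

theorem cx_finite_card : ∀ m : ℕ, Finite (Cx m) ∧ Nat.card (Cx m) ≤ (m+1).factorial := by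
  intro m
  induction m with
  | zero =>
    have h1 : ∀ x : Cx 0, x = 1 := by
      intro x
      have := PresentedGroup.generated_by (coxRels 0) ⊥ (fun j => j.elim0) x
      simpa using this
    have : Subsingleton (Cx 0) := ⟨fun a b => by rw [h1 a, h1 b]⟩
    refine ⟨Finite.of_subsingleton, ?_⟩
    have : Nat.card (Cx 0) = 1 := Nat.card_unique
    simp [this, Nat.factorial]
  | succ m ih =>
    obtain ⟨ihF, ihC⟩ := ih
    set D := (cxIncl m).range with hD
    haveI : Finite (Cx m) := ihF
    haveI hDfin : Finite D := Finite.of_surjective _ (cxIncl m).rangeRestrict_surjective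
    have hDcard : Nat.card D ≤ (m+1).factorial :=
      le_trans (Nat.card_le_card_of_surjective _ (cxIncl m).rangeRestrict_surjective) ihC
    set F : D × Fin (m+2) → Cx (m+1) := fun dk => (dk.1 : Cx (m+1)) * cseg (m+1) dk.2 (m+1)
      with hF
    -- T is the range of F
    have hT1 : (1 : Cx (m+1)) ∈ Set.range F :=
      ⟨(1, ⟨m+1, by omega⟩), by simp [hF, cseg_of_le]⟩
    have hstep : ∀ x ∈ Set.range F, ∀ i : Fin (m+1), x * cg i ∈ Set.range F := by
      rintro _ ⟨⟨d, k⟩, rfl⟩ i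
      have hcg : cg i = cgN (m+1) (i : ℕ) := by
        unfold cgN; rw [dif_pos i.2]
      simp only [hF]
      rw [mul_assoc, hcg]
      rcases lt_trichotomy ((i : ℕ) + 1) (k : ℕ) with h | h | h
      · -- i + 1 < k : commute, absorb into D
        rw [(csegE3 h).symm.eq, ← mul_assoc]
        exact ⟨(⟨(d : Cx (m+1)) * cgN (m+1) i, Subgroup.mul_mem _ d.2 (cgN_mem_range (by omega))⟩, k), rfl⟩
      · -- i + 1 = k : extend the word downwards
        have : cseg (m+1) k (m+1) * cgN (m+1) i = cseg (m+1) i (m+1) := by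
          rw [← h]; exact csegE2 i.2
        rw [this]
        exact ⟨(d, ⟨i, by omega⟩), rfl⟩
      · rcases Nat.lt_or_ge (k : ℕ) (i : ℕ) with h' | h'
        · -- k < i : braid-shuffle, absorb s_{i-1} into D
          rw [csegE4 h' i.2, ← mul_assoc]
          exact ⟨(⟨(d : Cx (m+1)) * cgN (m+1) ((i:ℕ)-1),
            Subgroup.mul_mem _ d.2 (cgN_mem_range (by omega))⟩, k), rfl⟩
        · -- i = k : shorten the word
          have hik : (i : ℕ) = (k : ℕ) := by omega
          rw [hik, csegE1 (by omega : (k:ℕ) < m+1)]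
          exact ⟨(d, ⟨(k:ℕ)+1, by omega⟩), rfl⟩
    -- the set of y with T*y ⊆ T and T*y⁻¹ ⊆ T is a subgroup containing the generators
    have hsurj : Function.Surjective F := by
      set KS : Subgroup (Cx (m+1)) :=
        { carrier := {x | ∀ t ∈ Set.range F, t * x ∈ Set.range F ∧ t * x⁻¹ ∈ Set.range F}
          one_mem' := by
            intro t ht
            simp only [Set.mem_setOf_eq, mul_one, inv_one]
            exact ⟨ht, ht⟩
          mul_mem' := by
            intro x y hx hy t ht
            constructor
            · rw [← mul_assoc]; exact (hy _ (hx t ht).1).1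
            · rw [mul_inv_rev, ← mul_assoc]; exact (hx _ (hy t ht).2).2
          inv_mem' := by
            intro x hx t ht
            refine ⟨(hx t ht).2, ?_⟩
            rw [inv_inv]; exact (hx t ht).1 }
      intro x
      have hx : x ∈ KS := by
        apply PresentedGroup.generated_by
        intro j t ht
        refine ⟨hstep t ht j, ?_⟩
        show t * (cg j)⁻¹ ∈ Set.range F
        rw [cg_inv]
        exact hstep t ht j
      have := (hx 1 hT1).1
      rwa [one_mul] at this
    refine ⟨Finite.of_surjective F hsurj, ?_⟩
    have c1 : Nat.card (Cx (m+1)) ≤ Nat.card (D × Fin (m+2)) :=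
      Nat.card_le_card_of_surjective F hsurj
    rw [Nat.card_prod, show Nat.card (Fin (m+2)) = m + 2 by simp] at c1
    calc Nat.card (Cx (m+1)) ≤ Nat.card D * (m+2) := c1
      _ ≤ (m+1).factorial * (m+2) := Nat.mul_le_mul_right _ hDcard
      _ = (m+2).factorial := by
        rw [show m+2 = (m+1)+1 from rfl, Nat.factorial_succ ((m+1)), Nat.mul_comm]

section SwapLemmas
variable {α : Type*} [DecidableEq α]

lemma swap_braid {a b c : α} (hab : a ≠ b) (hbc : b ≠ c) (hac : a ≠ c) :
    Equiv.swap a b * Equiv.swap b c * Equiv.swap a b =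
      Equiv.swap b c * Equiv.swap a b * Equiv.swap b c := by
  have h1 : Equiv.swap a b * Equiv.swap b c * Equiv.swap a b = Equiv.swap a c := by
    have := Equiv.swap_mul_swap_mul_swap (x := c) (y := b) (z := a)
      (Ne.symm hbc) (Ne.symm hac)
    rw [Equiv.swap_comm b a, Equiv.swap_comm c b] at this
    rw [this, Equiv.swap_comm]
  have h2 : Equiv.swap b c * Equiv.swap a b * Equiv.swap b c = Equiv.swap a c := by
    have := Equiv.swap_mul_swap_mul_swap (x := a) (y := b) (z := c) hab hac
    rw [this, Equiv.swap_comm]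
  rw [h1, h2]

lemma swap_disj_comm_s14 {a b c d : α} (hca : c ≠ a) (hcb : c ≠ b) (hda : d ≠ a) (hdb : d ≠ b) :
    Commute (Equiv.swap a b) (Equiv.swap c d) := by
  have : Equiv.swap (Equiv.swap a b c) (Equiv.swap a b d)
      = Equiv.swap a b * Equiv.swap c d * (Equiv.swap a b)⁻¹ :=
    Equiv.swap_apply_apply _ _ _
  rw [Equiv.swap_apply_of_ne_of_ne hca hcb, Equiv.swap_apply_of_ne_of_ne hda hdb] at this
  exact mul_inv_eq_iff_eq_mul.mp this.symm

end SwapLemmas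

def adjSwap (n : ℕ) (i : Fin (n-1)) : Equiv.Perm (Fin n) :=
  Equiv.swap ⟨(i : ℕ), by have := i.2; omega⟩ ⟨(i : ℕ) + 1, by have := i.2; omega⟩

noncomputable def psiHom (n : ℕ) : Cx (n-1) →* Equiv.Perm (Fin n) :=
  PresentedGroup.toGroup (f := adjSwap n) (by
    rintro r (⟨i, j, ⟨hij, rfl⟩ | ⟨hij, rfl⟩⟩ | ⟨i, rfl⟩)
    · simp only [map_mul, map_inv, FreeGroup.lift_apply_of]
      rw [mul_inv_eq_one]
      have hi2 := i.2; have hj2 := j.2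
      unfold adjSwap
      have e1 : (⟨(j:ℕ), by omega⟩ : Fin n) = ⟨(i:ℕ)+1, by omega⟩ := by
        simp only [Fin.mk.injEq]; omega
      have e2 : (⟨(j:ℕ)+1, by omega⟩ : Fin n) = ⟨(i:ℕ)+2, by omega⟩ := by
        simp only [Fin.mk.injEq]; omega
      rw [e1, e2]
      exact swap_braid (by simp [Fin.ext_iff]) (by simp [Fin.ext_iff]) (by simp [Fin.ext_iff])
    · simp only [map_mul, map_inv, FreeGroup.lift_apply_of]
      rw [mul_inv_eq_one]
      have hi2 := i.2; have hj2 := j.2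
      unfold adjSwap
      exact (swap_disj_comm_s14 (by simp [Fin.ext_iff]; omega) (by simp [Fin.ext_iff]; omega)
        (by simp [Fin.ext_iff]; omega) (by simp [Fin.ext_iff]; omega)).eq
    · simp only [map_mul, FreeGroup.lift_apply_of]
      unfold adjSwap
      exact Equiv.swap_mul_self _ _)

lemma psiHom_of (n : ℕ) (i : Fin (n-1)) : psiHom n (cg i) = adjSwap n i :=
  PresentedGroup.toGroup.of _

section GTlem
variable {n : ℕ}

lemma relGT_one {r : FreeGroup (PairIdx n ⊕ PairIdx n)} (h : r ∈ reltT n 2) :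
    PresentedGroup.mk (reltT n 2) r = 1 :=
  (QuotientGroup.eq_one_iff _).mpr (Subgroup.subset_normalClosure h)

/-- `S i j`: image of the half twist. -/
def SS (i j : Fin n) : GT n 2 := PresentedGroup.mk (reltT n 2) (sU i j)
/-- `G i j`: image of the full twist generator. -/
def GG (i j : Fin n) : GT n 2 := PresentedGroup.mk (reltT n 2) (gU i j)

lemma sU_symm {i j : Fin n} (h : i ≠ j) : sU i j = sU j i := by
  rcases lt_trichotomy i j with h' | h' | h'
  · rw [sU, sU, dif_pos h', dif_neg (asymm h'), dif_pos h']
  · exact absurd h' h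
  · rw [sU, sU, dif_pos h', dif_neg (asymm h'), dif_pos h']

lemma gU_symm {i j : Fin n} (h : i ≠ j) : gU i j = gU j i := by
  rcases lt_trichotomy i j with h' | h' | h'
  · rw [gU, gU, dif_pos h', dif_neg (asymm h'), dif_pos h']
  · exact absurd h' h
  · rw [gU, gU, dif_pos h', dif_neg (asymm h'), dif_pos h']

lemma SS_symm {i j : Fin n} (h : i ≠ j) : SS i j = SS j i := by rw [SS, SS, sU_symm h]
lemma GG_symm {i j : Fin n} (h : i ≠ j) : GG i j = GG j i := by rw [GG, GG, gU_symm h]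

lemma gU_cases (i j : Fin n) : (∃ p : PairIdx n, gU i j = gF p) ∨ gU i j = 1 := by
  rw [gU]
  split
  · exact Or.inl ⟨_, rfl⟩
  · split
    · exact Or.inl ⟨_, rfl⟩
    · exact Or.inr rfl

lemma sU_cases (i j : Fin n) : (∃ p : PairIdx n, sU i j = sF p) ∨ sU i j = 1 := by
  rw [sU]
  split
  · exact Or.inl ⟨_, rfl⟩
  · split
    · exact Or.inl ⟨_, rfl⟩
    · exact Or.inr rfl

lemma GG_comm (i j k l : Fin n) : Commute (GG i j) (GG k l) := by
  have key : ∀ p q : PairIdx n,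
      Commute (PresentedGroup.mk (reltT n 2) (gF p)) (PresentedGroup.mk (reltT n 2) (gF q)) := by
    intro p q
    have := relGT_one (n := n)
      (Or.inl (Or.inl (Or.inl (Or.inl (Or.inl ⟨p, q, rfl⟩)))) :
        gF p * gF q * (gF p)⁻¹ * (gF q)⁻¹ ∈ reltT n 2)
    simp only [map_mul, map_inv] at this
    show _ * _ = _ * _
    rw [← mul_inv_eq_one]
    group at this ⊢
    try exact this
  rcases gU_cases i j with ⟨p, hp⟩ | hp <;> rcases gU_cases k l with ⟨q, hq⟩ | hq <;>
      rw [GG, GG, hp, hq] <;>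
    first
      | exact key _ _
      | (rw [map_one]; exact Commute.one_right _)
      | (rw [map_one]; exact Commute.one_left _)
      | exact Commute.one_right _
      | exact Commute.one_left _

lemma SS_sq {i j : Fin n} (h : i < j) : SS i j * SS i j = GG i j * GG i j := by
  have := relGT_one (n := n)
    (Or.inl (Or.inl (Or.inl (Or.inl (Or.inr ⟨⟨(i,j), h⟩, rfl⟩)))) :
      sF ⟨(i,j),h⟩ ^ 2 * (gF ⟨(i,j),h⟩ ^ (2:ℤ))⁻¹ ∈ reltT n 2)
  simp only [map_mul, map_inv, map_pow, map_zpow] at this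
  rw [mul_inv_eq_one] at this
  rw [SS, GG, sU, gU, dif_pos h, dif_pos h, ← zpow_two, ← zpow_two]
  exact this

lemma SS_sq' {i j : Fin n} (h : i ≠ j) : SS i j * SS i j = GG i j * GG i j := by
  rcases lt_or_gt_of_ne h with h' | h'
  · exact SS_sq h'
  · rw [SS_symm h, GG_symm h]; exact SS_sq h'

lemma R3 {i j k : Fin n} (h : (k < i ∧ i < j) ∨ (i < j ∧ j < k) ∨ (j < k ∧ k < i)) :
    SS i j * SS k j * (SS i j)⁻¹ = SS i k := by
  have := relGT_one (n := n)
    (Or.inl (Or.inl (Or.inl (Or.inr ⟨i, j, k, h, rfl⟩))) :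
      sU i j * sU k j * (sU i j)⁻¹ * (sU i k)⁻¹ ∈ reltT n 2)
  simp only [map_mul, map_inv] at this
  rw [mul_inv_eq_one] at this
  exact this

lemma R4 {i j k : Fin n} (h : (i < k ∧ k < j) ∨ (j < i ∧ i < k) ∨ (k < j ∧ j < i)) :
    (SS i j)⁻¹ * SS j k * SS i j = SS i k := by
  have := relGT_one (n := n)
    (Or.inl (Or.inl (Or.inr ⟨i, j, k, h, rfl⟩)) :
      (sU i j)⁻¹ * sU j k * sU i j * (sU i k)⁻¹ ∈ reltT n 2)
  simp only [map_mul, map_inv] at this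
  rw [mul_inv_eq_one] at this
  exact this

lemma R5far {i j k l : Fin n} (hij : i < j) (hkl : k < l) (hjk : j < k) :
    Commute (SS i j) (SS k l) := by
  have hmem : sU i j * sU k l * (sU i j)⁻¹ * (sU k l)⁻¹ *
      ((if i < k ∧ k < j ∧ j < l then
          gU i k ^ (2:ℤ) * gU i l ^ (-2:ℤ) * gU j k ^ (-2:ℤ) * gU j l ^ (2:ℤ)
        else if k < i ∧ i < l ∧ l < j then
          gU k i ^ (-2:ℤ) * gU k j ^ (2:ℤ) * gU i l ^ (2:ℤ) * gU l j ^ (-2:ℤ)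
        else 1 : FreeGroup (PairIdx n ⊕ PairIdx n)))⁻¹ ∈ reltT n 2 :=
    Or.inl (Or.inr ⟨i, j, k, l, hij, hkl, rfl⟩)
  rw [if_neg (by rintro ⟨-, h2, -⟩; exact absurd (h2.trans hjk) (lt_irrefl _)),
    if_neg (by rintro ⟨h1, -, -⟩; exact absurd (hij.trans (hjk.trans h1)) (lt_irrefl _)),
    inv_one, mul_one] at hmem
  have := relGT_one hmem
  simp only [map_mul, map_inv] at this
  show _ * _ = _ * _
  rw [← mul_inv_eq_one]
  group at this ⊢
  try exact this

lemma R6 {i j k l : Fin n} (hij : i ≠ j) (hkl : k ≠ l) :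
    SS i j * GG k l * (SS i j)⁻¹ = GG (Equiv.swap i j k) (Equiv.swap i j l) := by
  have := relGT_one (n := n)
    (Or.inr ⟨i, j, k, l, hij, hkl, rfl⟩ :
      sU i j * gU k l * (sU i j)⁻¹ * (gU (Equiv.swap i j k) (Equiv.swap i j l))⁻¹ ∈ reltT n 2)
  simp only [map_mul, map_inv] at this
  rw [mul_inv_eq_one] at this
  exact this

lemma conj_comm_of_eq {G : Type*} [Group G] {s g : G} (h : s * g * s⁻¹ = g) : Commute s g := by
  have := mul_inv_eq_iff_eq_mul.mp h
  exact this

lemma conj_move {G : Type*} [Group G] {s g g' : G} (h : s * g' * s⁻¹ = g) :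
    g⁻¹ * s = s * g'⁻¹ := by
  have h2 : s * g' = g * s := by
    calc s * g' = (s * g' * s⁻¹) * s := by group
    _ = g * s := by rw [h]
  calc g⁻¹ * s = g⁻¹ * (s * g') * g'⁻¹ := by group
    _ = g⁻¹ * (g * s) * g'⁻¹ := by rw [h2]
    _ = s * g'⁻¹ := by group

lemma braid_abstract {G : Type*} [Group G] (a b c ga gb gc : G)
    (h1 : a * b * a⁻¹ = c) (h2 : b * c * b⁻¹ = a)
    (sqa : a * a = ga * ga) (sqb : b * b = gb * gb)
    (habc : a * gb * a⁻¹ = gc) (hacb : a * gc * a⁻¹ = gb)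
    (hbac : b * ga * b⁻¹ = gc) (hbca : b * gc * b⁻¹ = ga)
    (hcab : c * ga * c⁻¹ = gb)
    (g12 : Commute ga gb) (g13 : Commute ga gc) (g23 : Commute gb gc) :
    (a * ga⁻¹) * (b * gb⁻¹) * (a * ga⁻¹) = (b * gb⁻¹) * (a * ga⁻¹) * (b * gb⁻¹) := by
  have mv1 : ga⁻¹ * b = b * gc⁻¹ := conj_move hbca
  have mv2 : gb⁻¹ * a = a * gc⁻¹ := conj_move hacb
  have mv3 : gc⁻¹ * a = a * gb⁻¹ := conj_move habc
  have mv4 : gc⁻¹ * b = b * ga⁻¹ := conj_move hbac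
  have e5 : a * b * a = c * (a * a) := by
    calc a * b * a = (a * b * a⁻¹) * (a * a) := by group
    _ = c * (a * a) := by rw [h1]
  have e6 : b * a * b = (b * b) * c := by
    calc b * a * b = b * (b * c * b⁻¹) * b := by rw [h2]
    _ = (b * b) * c := by group
  have e7 : c * (ga * ga) = (gb * gb) * c := by
    calc c * (ga * ga) = (c * ga * c⁻¹) * (c * ga * c⁻¹) * c := by group
    _ = (gb * gb) * c := by rw [hcab]
  have core : a * b * a = b * a * b := by
    rw [e5, sqa, e7, ← sqb, ← e6]
  have c1 := g12.inv_inv.eq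
  have c2 := g13.inv_inv.eq
  have c3 := g23.inv_inv.eq
  have gtr : gb⁻¹ * (gc⁻¹ * ga⁻¹) = ga⁻¹ * (gc⁻¹ * gb⁻¹) := by
    rw [← c2, ← mul_assoc, ← c1, mul_assoc, c3]
  calc (a * ga⁻¹) * (b * gb⁻¹) * (a * ga⁻¹)
      = a * (ga⁻¹ * b) * (gb⁻¹ * a) * ga⁻¹ := by group
    _ = a * (b * gc⁻¹) * (a * gc⁻¹) * ga⁻¹ := by rw [mv1, mv2]
    _ = a * b * (gc⁻¹ * a) * (gc⁻¹ * ga⁻¹) := by group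
    _ = a * b * (a * gb⁻¹) * (gc⁻¹ * ga⁻¹) := by rw [mv3]
    _ = (a * b * a) * (gb⁻¹ * (gc⁻¹ * ga⁻¹)) := by group
    _ = (b * a * b) * (ga⁻¹ * (gc⁻¹ * gb⁻¹)) := by rw [core, gtr]
    _ = b * a * (b * ga⁻¹) * (gc⁻¹ * gb⁻¹) := by group
    _ = b * a * (gc⁻¹ * b) * (gc⁻¹ * gb⁻¹) := by rw [← mv4]
    _ = b * (a * gc⁻¹) * (b * gc⁻¹) * gb⁻¹ := by group
    _ = b * (gb⁻¹ * a) * (ga⁻¹ * b) * gb⁻¹ := by rw [← mv2, ← mv1]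
    _ = (b * gb⁻¹) * (a * ga⁻¹) * (b * gb⁻¹) := by group

lemma comm_S_G {i j : Fin n} (h : i ≠ j) : Commute (SS i j) (GG i j) := by
  apply conj_comm_of_eq
  rw [R6 h h, Equiv.swap_apply_left, Equiv.swap_apply_right, GG_symm h.symm]

lemma xg_sq {i j : Fin n} (h : i ≠ j) :
    (SS i j * (GG i j)⁻¹) * (SS i j * (GG i j)⁻¹) = 1 := by
  have hc : Commute (GG i j)⁻¹ (SS i j) := ((comm_S_G h).symm.inv_left)
  calc (SS i j * (GG i j)⁻¹) * (SS i j * (GG i j)⁻¹)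
      = SS i j * ((GG i j)⁻¹ * SS i j) * (GG i j)⁻¹ := by group
    _ = SS i j * (SS i j * (GG i j)⁻¹) * (GG i j)⁻¹ := by rw [hc.eq]
    _ = (SS i j * SS i j) * ((GG i j) * (GG i j))⁻¹ := by group
    _ = 1 := by rw [SS_sq' h]; group

lemma xg_braid {u v w : Fin n} (huv : u < v) (hvw : v < w) :
    (SS u v * (GG u v)⁻¹) * (SS v w * (GG v w)⁻¹) * (SS u v * (GG u v)⁻¹) =
      (SS v w * (GG v w)⁻¹) * (SS u v * (GG u v)⁻¹) * (SS v w * (GG v w)⁻¹) := by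
  have huw : u < w := huv.trans hvw
  have nuv : u ≠ v := ne_of_lt huv
  have nvw : v ≠ w := ne_of_lt hvw
  have nuw : u ≠ w := ne_of_lt huw
  apply braid_abstract (c := SS u w) (gc := GG u w)
  · rw [← SS_symm nvw.symm]  -- note: SS w v = SS v w
    exact R3 (Or.inr (Or.inl ⟨huv, hvw⟩))
  · rw [show SS u v = SS v u from SS_symm nuv]
    exact R3 (Or.inl ⟨huv, hvw⟩)
  · exact SS_sq huv
  · exact SS_sq hvw
  · rw [R6 nuv nvw, Equiv.swap_apply_right,
      Equiv.swap_apply_of_ne_of_ne nuw.symm nvw.symm]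
  · rw [R6 nuv nuw, Equiv.swap_apply_left,
      Equiv.swap_apply_of_ne_of_ne nuw.symm nvw.symm, GG_symm nvw]
  · rw [R6 nvw nuv, Equiv.swap_apply_of_ne_of_ne nuv nuw,
      Equiv.swap_apply_left]
  · rw [R6 nvw nuw, Equiv.swap_apply_of_ne_of_ne nuv nuw,
      Equiv.swap_apply_right, GG_symm nuv]
  · rw [R6 nuw nuv, Equiv.swap_apply_left,
      Equiv.swap_apply_of_ne_of_ne nuv.symm nvw, GG_symm nvw.symm]
  · exact GG_comm u v v w
  · exact GG_comm u v u w
  · exact GG_comm v w u w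

lemma xg_far {u v w x : Fin n} (huv : u < v) (hwx : w < x) (hvw : v < w) :
    Commute (SS u v * (GG u v)⁻¹) (SS w x * (GG w x)⁻¹) := by
  have nuv : u ≠ v := ne_of_lt huv
  have nwx : w ≠ x := ne_of_lt hwx
  have hwu : w ≠ u := ne_of_gt (huv.trans hvw)
  have hwv : w ≠ v := ne_of_gt hvw
  have hxu : x ≠ u := ne_of_gt ((huv.trans hvw).trans hwx)
  have hxv : x ≠ v := ne_of_gt (hvw.trans hwx)
  have cSS : Commute (SS u v) (SS w x) := R5far huv hwx hvw
  have cSg : Commute (SS u v) (GG w x) := by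
    apply conj_comm_of_eq
    rw [R6 nuv nwx, Equiv.swap_apply_of_ne_of_ne hwu hwv,
      Equiv.swap_apply_of_ne_of_ne hxu hxv]
  have cgS : Commute (SS w x) (GG u v) := by
    apply conj_comm_of_eq
    rw [R6 nwx nuv, Equiv.swap_apply_of_ne_of_ne hwu.symm hxu.symm,
      Equiv.swap_apply_of_ne_of_ne hwv.symm hxv.symm]
  exact Commute.mul_left (cSS.mul_right cSg.inv_right)
    ((cgS.symm.inv_left).mul_right ((GG_comm u v w x).inv_left.inv_right))

end GTlem

/-- The candidate images of the Coxeter generators in `GT n 2`. -/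
def xadj (n : ℕ) (i : Fin (n-1)) : GT n 2 :=
  SS ⟨(i:ℕ), by have := i.2; omega⟩ ⟨(i:ℕ)+1, by have := i.2; omega⟩ *
    (GG ⟨(i:ℕ), by have := i.2; omega⟩ ⟨(i:ℕ)+1, by have := i.2; omega⟩)⁻¹

noncomputable def phiHom (n : ℕ) : Cx (n-1) →* GT n 2 :=
  PresentedGroup.toGroup (f := xadj n) (by
    rintro r (⟨i, j, ⟨hij, rfl⟩ | ⟨hij, rfl⟩⟩ | ⟨i, rfl⟩)
    · simp only [map_mul, map_inv, FreeGroup.lift_apply_of]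
      rw [mul_inv_eq_one]
      have hi2 := i.2; have hj2 := j.2
      unfold xadj
      have e1 : (⟨(j:ℕ), by omega⟩ : Fin n) = ⟨(i:ℕ)+1, by omega⟩ := by
        simp only [Fin.mk.injEq]; omega
      have e2 : (⟨(j:ℕ)+1, by omega⟩ : Fin n) = ⟨(i:ℕ)+2, by omega⟩ := by
        simp only [Fin.mk.injEq]; omega
      rw [e1, e2]
      exact xg_braid (by simp [Fin.lt_def]) (by simp [Fin.lt_def])
    · simp only [map_mul, map_inv, FreeGroup.lift_apply_of]
      rw [mul_inv_eq_one]
      have hi2 := i.2; have hj2 := j.2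
      unfold xadj
      exact (xg_far (by simp [Fin.lt_def]) (by simp [Fin.lt_def]) (by simp [Fin.lt_def]; omega)).eq
    · simp only [map_mul, FreeGroup.lift_apply_of]
      unfold xadj
      exact xg_sq (by simp [Fin.ext_iff]))

lemma phiHom_of (n : ℕ) (i : Fin (n-1)) : phiHom n (cg i) = xadj n i :=
  PresentedGroup.toGroup.of _


section Pi2
variable {n : ℕ} (π₂ : GT n 2 →* Equiv.Perm (Fin n))
  (hs : ∀ p : PairIdx n, π₂ (PresentedGroup.of (Sum.inl p)) = Equiv.swap p.1.1 p.1.2)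
  (hg : ∀ p : PairIdx n, π₂ (PresentedGroup.of (Sum.inr p)) = 1)

include hs in
lemma pi2_SS {i j : Fin n} (h : i ≠ j) : π₂ (SS i j) = Equiv.swap i j := by
  rcases lt_or_gt_of_ne h with h' | h'
  · rw [SS, sU, dif_pos h']
    exact hs ⟨(i, j), h'⟩
  · rw [SS, sU, dif_neg (asymm h'), dif_pos h']
    rw [show Equiv.swap i j = Equiv.swap j i from Equiv.swap_comm i j]
    exact hs ⟨(j, i), h'⟩

include hg in
lemma pi2_GG (i j : Fin n) : π₂ (GG i j) = 1 := by
  rcases gU_cases i j with ⟨p, hp⟩ | hp <;> rw [GG, hp]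
  · exact hg p
  · rw [map_one, map_one]

end Pi2

/-- For `n ≥ 2`, the cohomology class `[φ] ∈ H²(S_n; ℤ^(n choose 2))`
classifying the extension `0 → ℤ^(n choose 2) → G_n → S_n → 1` (with
`G_n = B_n/[PB_n,PB_n]`) has order exactly 2.  Concretely: `[φ] ≠ 0`, i.e. the extension
`G_n → S_n` admits no splitting homomorphism; and `2·[φ] = 0`, i.e. the extension `G_n^2`
(classified by `2[φ]`) splits. -/
theorem statement14 (n : ℕ) (hn : 2 ≤ n) (π : BraidGroup n →* Equiv.Perm (Fin n))
    (hgen : IsBraidProj n π) (hsurj : Function.Surjective π) :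
    -- `[φ] ≠ 0`: the extension `G_n` of `S_n` does not split
    (∀ p : Gq n π →* Equiv.Perm (Fin n),
      (∀ x : BraidGroup n, p (QuotientGroup.mk x) = π x) →
      ¬ ∃ ω : Equiv.Perm (Fin n) →* Gq n π,
          p.comp ω = MonoidHom.id (Equiv.Perm (Fin n))) ∧
    -- `2·[φ] = 0`: the extension `G_n^2` of `S_n` splits
    (∀ π₂ : GT n 2 →* Equiv.Perm (Fin n),
      (∀ p : PairIdx n, π₂ (PresentedGroup.of (Sum.inl p)) = Equiv.swap p.1.1 p.1.2) →
      (∀ p : PairIdx n, π₂ (PresentedGroup.of (Sum.inr p)) = 1) →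
      ∃ ω : Equiv.Perm (Fin n) →* GT n 2,
        π₂.comp ω = MonoidHom.id (Equiv.Perm (Fin n))) := by
  constructor
  · -- Part 1: non-splitting of `G_n → S_n`
    rintro p hp ⟨ω, hω⟩
    have key : ∀ x : Gq n π, Equiv.Perm.sign (p x) = (-1:ℤˣ)^((expSumQ n π x).toAdd) := by
      intro x
      induction x using QuotientGroup.induction_on with
      | _ y =>
        have h1 : (Equiv.Perm.sign).comp π = sgnB n := by
          ext i
          rw [MonoidHom.comp_apply, hgen i]
          simp [sgnB, Equiv.Perm.sign_swap, Fin.ne_of_val_ne]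
        have := DFunLike.congr_fun h1 y
        simp only [MonoidHom.comp_apply] at this
        rw [hp, expSumQ_mk, this]
        simp [sgnB]
    set a : Fin n := ⟨0, by omega⟩
    set b : Fin n := ⟨1, by omega⟩
    have hab : a ≠ b := by simp [a, b, Fin.ext_iff]
    set w := ω (Equiv.swap a b) with hw
    have h2 : w * w = 1 := by
      rw [hw, ← map_mul, Equiv.swap_mul_self, map_one]
    have h3 : (expSumQ n π w).toAdd = 0 := by
      have := congrArg (fun z => (expSumQ n π z).toAdd) h2
      simp only [map_mul, toAdd_mul, map_one, toAdd_one] at this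
      omega
    have h4 : p w = Equiv.swap a b := by
      have := DFunLike.congr_fun hω (Equiv.swap a b)
      simpa using this
    have := key w
    rw [h4, h3, zpow_zero, Equiv.Perm.sign_swap hab] at this
    exact absurd this (by decide)
  · -- Part 2: the extension `G_n^2 → S_n` splits
    intro π₂ hs hg
    -- the adjacent transpositions generate `S_n`
    have hclos : Subgroup.closure (Set.range (adjSwap n)) = ⊤ := by
      have h2 : Subgroup.closure (Set.range (adjSwap n)) = π.range := by
        have hfun : (π ∘ (PresentedGroup.of : Fin (n-1) → BraidGroup n)) = adjSwap n := by
          funext i; exact hgen i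
        rw [MonoidHom.range_eq_map, ← PresentedGroup.closure_range_of (braidRels n),
          MonoidHom.map_closure, ← Set.range_comp, hfun]
      rw [h2, MonoidHom.range_eq_top]
      exact hsurj
    -- the Coxeter presented group maps onto `S_n`
    have hψ : Function.Surjective (psiHom n) := by
      rw [← MonoidHom.range_eq_top, eq_top_iff, ← hclos, Subgroup.closure_le]
      rintro - ⟨i, rfl⟩
      exact ⟨cg i, psiHom_of n i⟩
    haveI hfin : Finite (Cx (n-1)) := (cx_finite_card (n-1)).1
    have hcard : Nat.card (Cx (n-1)) = Nat.card (Equiv.Perm (Fin n)) := by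
      have hperm : Nat.card (Equiv.Perm (Fin n)) = n.factorial := by
        rw [Nat.card_eq_fintype_card, Fintype.card_perm, Fintype.card_fin]
      refine le_antisymm ?_ ?_
      · rw [hperm]
        have := (cx_finite_card (n-1)).2
        rwa [Nat.sub_add_cancel (by omega : 1 ≤ n)] at this
      · exact Nat.card_le_card_of_surjective _ hψ
    have hbij : Function.Bijective (psiHom n) :=
      (Nat.bijective_iff_surjective_and_card _).mpr ⟨hψ, hcard⟩
    set e := MulEquiv.ofBijective _ hbij with he
    refine ⟨(phiHom n).comp e.symm.toMonoidHom, ?_⟩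
    have hcomp : π₂.comp (phiHom n) = psiHom n := by
      apply PresentedGroup.ext
      intro i
      show π₂ (phiHom n (cg i)) = psiHom n (cg i)
      rw [phiHom_of, psiHom_of]
      unfold xadj adjSwap
      rw [map_mul, map_inv, pi2_SS π₂ hs (by simp [Fin.ext_iff]), pi2_GG π₂ hg, inv_one, mul_one]
    ext σ
    have h5 : π₂ (phiHom n (e.symm σ)) = psiHom n (e.symm σ) :=
      DFunLike.congr_fun hcomp (e.symm σ)
    have h6 : psiHom n (e.symm σ) = e (e.symm σ) := rfl
    simp only [MonoidHom.comp_apply, MonoidHom.id_apply, MulEquiv.coe_toMonoidHom]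
    rw [h5, h6, MulEquiv.apply_symm_apply]
end
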